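/- arXiv:1410.2596 — 3 statements merged into one kernel-verified Lean document; each statement's English description precedes it below -/
import Mathlib

section
/- Let λ > 0 and let (A_k, B_k), k ≥ 1, be the softImpute-ALS iterates. Then (a) every limit point (A*,B*) of the sequence (A_k,B_k) is a first-order stationary point of F, i.e., ∇_A F(A*,B*) = 0 and ∇_B F(A*,B*) = 0; and (b) if B* is a limit point of (B_k) along a subsequence ν with B_k → B* for k ∈ ν, then the subsequence (A_k)_{k∈ν} converges; symmetrically, if A* is a limit point of (A_k) along a subsequence μ, then (B_k)_{k∈μ} converges. -/
noncomputable section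

open Matrix Filter

/-- Squared Frobenius norm of a real matrix. -/
def frobSq {m n : ℕ} (M : Matrix (Fin m) (Fin n) ℝ) : ℝ := ∑ i, ∑ j, (M i j) ^ 2

/-- `P_Ω`: keep the entries in `Ω`, zero out the rest. -/
def proj {m n : ℕ} (Ω : Finset (Fin m × Fin n)) (Y : Matrix (Fin m) (Fin n) ℝ) :
    Matrix (Fin m) (Fin n) ℝ := Matrix.of fun i j => if (i, j) ∈ Ω then Y i j else 0

/-- `P_Ω^⊥`: zero out the entries in `Ω`, keep the rest. -/
def projPerp {m n : ℕ} (Ω : Finset (Fin m × Fin n)) (Y : Matrix (Fin m) (Fin n) ℝ) :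
    Matrix (Fin m) (Fin n) ℝ := Matrix.of fun i j => if (i, j) ∈ Ω then 0 else Y i j

/-- `F(A,B) = (1/2)‖P_Ω(X − ABᵀ)‖_F² + (λ/2)(‖A‖_F² + ‖B‖_F²)`. -/
def Fobj {m n r : ℕ} (Ω : Finset (Fin m × Fin n)) (X : Matrix (Fin m) (Fin n) ℝ) (lam : ℝ)
    (A : Matrix (Fin m) (Fin r) ℝ) (B : Matrix (Fin n) (Fin r) ℝ) : ℝ :=
  (1 / 2) * frobSq (proj Ω (X - A * Bᵀ)) + (lam / 2) * (frobSq A + frobSq B)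

/-- `Q_A(Z₁|A,B)`. -/
def QA {m n r : ℕ} (Ω : Finset (Fin m × Fin n)) (X : Matrix (Fin m) (Fin n) ℝ) (lam : ℝ)
    (Z₁ : Matrix (Fin m) (Fin r) ℝ) (A : Matrix (Fin m) (Fin r) ℝ)
    (B : Matrix (Fin n) (Fin r) ℝ) : ℝ :=
  (1 / 2) * frobSq (proj Ω (X - Z₁ * Bᵀ) + projPerp Ω (A * Bᵀ - Z₁ * Bᵀ)) +
    (lam / 2) * frobSq Z₁ + (lam / 2) * frobSq B

/-- `Q_B(Z₂|A,B)`. -/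
def QB {m n r : ℕ} (Ω : Finset (Fin m × Fin n)) (X : Matrix (Fin m) (Fin n) ℝ) (lam : ℝ)
    (Z₂ : Matrix (Fin n) (Fin r) ℝ) (A : Matrix (Fin m) (Fin r) ℝ)
    (B : Matrix (Fin n) (Fin r) ℝ) : ℝ :=
  (1 / 2) * frobSq (proj Ω (X - A * Z₂ᵀ) + projPerp Ω (A * Bᵀ - A * Z₂ᵀ)) +
    (lam / 2) * frobSq A + (lam / 2) * frobSq Z₂

/-- `(A_k, B_k)` are softImpute-ALS iterates: `A_{k+1} ∈ argmin Q_A(·|A_k,B_k)` and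
`B_{k+1} ∈ argmin Q_B(·|A_{k+1},B_k)`. -/
def SoftImputeALS {m n r : ℕ} (Ω : Finset (Fin m × Fin n)) (X : Matrix (Fin m) (Fin n) ℝ)
    (lam : ℝ) (A : ℕ → Matrix (Fin m) (Fin r) ℝ) (B : ℕ → Matrix (Fin n) (Fin r) ℝ) : Prop :=
  ∀ k : ℕ,
    (∀ Z₁ : Matrix (Fin m) (Fin r) ℝ,
      QA Ω X lam (A (k + 1)) (A k) (B k) ≤ QA Ω X lam Z₁ (A k) (B k)) ∧
    (∀ Z₂ : Matrix (Fin n) (Fin r) ℝ,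
      QB Ω X lam (B (k + 1)) (A (k + 1)) (B k) ≤ QB Ω X lam Z₂ (A (k + 1)) (B k))
namespace SIA

/-- entrywise inner product -/
def ip {a b : ℕ} (M N : Matrix (Fin a) (Fin b) ℝ) : ℝ := ∑ i, ∑ j, M i j * N i j

lemma ip_self {a b : ℕ} (M : Matrix (Fin a) (Fin b) ℝ) : ip M M = frobSq M := by
  simp [ip, frobSq, sq]

lemma frobSq_nonneg {a b : ℕ} (M : Matrix (Fin a) (Fin b) ℝ) : 0 ≤ frobSq M :=
  Finset.sum_nonneg fun i _ => Finset.sum_nonneg fun j _ => sq_nonneg _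

lemma frobSq_eq_zero {a b : ℕ} {M : Matrix (Fin a) (Fin b) ℝ} (h : frobSq M = 0) : M = 0 := by
  ext i j
  have h1 := (Finset.sum_eq_zero_iff_of_nonneg (fun i _ =>
    Finset.sum_nonneg fun j _ => sq_nonneg (M i j))).1 h i (Finset.mem_univ i)
  have h2 := (Finset.sum_eq_zero_iff_of_nonneg (fun j _ => sq_nonneg (M i j))).1 h1 j
    (Finset.mem_univ j)
  have := sq_eq_zero_iff.1 h2
  simpa using this

lemma ip_comm {a b : ℕ} (M N : Matrix (Fin a) (Fin b) ℝ) : ip M N = ip N M := by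
  simp [ip, mul_comm]

lemma ip_add_left {a b : ℕ} (M N P : Matrix (Fin a) (Fin b) ℝ) :
    ip (M + N) P = ip M P + ip N P := by
  simp [ip, Matrix.add_apply, add_mul, Finset.sum_add_distrib]

lemma ip_sub_left {a b : ℕ} (M N P : Matrix (Fin a) (Fin b) ℝ) :
    ip (M - N) P = ip M P - ip N P := by
  simp [ip, Matrix.sub_apply, sub_mul, Finset.sum_sub_distrib]

lemma ip_smul_left {a b : ℕ} (t : ℝ) (M P : Matrix (Fin a) (Fin b) ℝ) :
    ip (t • M) P = t * ip M P := by
  simp [ip, Matrix.smul_apply, Finset.mul_sum, mul_assoc]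

lemma ip_smul_right {a b : ℕ} (t : ℝ) (M P : Matrix (Fin a) (Fin b) ℝ) :
    ip M (t • P) = t * ip M P := by
  rw [ip_comm, ip_smul_left, ip_comm]

lemma frobSq_add {a b : ℕ} (M N : Matrix (Fin a) (Fin b) ℝ) :
    frobSq (M + N) = frobSq M + 2 * ip M N + frobSq N := by
  simp only [frobSq, ip, Matrix.add_apply]
  rw [Finset.mul_sum, ← Finset.sum_add_distrib, ← Finset.sum_add_distrib]
  refine Finset.sum_congr rfl fun i _ => ?_
  rw [Finset.mul_sum, ← Finset.sum_add_distrib, ← Finset.sum_add_distrib]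
  exact Finset.sum_congr rfl fun j _ => by ring

lemma frobSq_sub {a b : ℕ} (M N : Matrix (Fin a) (Fin b) ℝ) :
    frobSq (M - N) = frobSq M - 2 * ip M N + frobSq N := by
  simp only [frobSq, ip, Matrix.sub_apply]
  rw [Finset.mul_sum]
  rw [show (∑ i, ∑ j, (M i j - N i j) ^ 2) = ∑ i, ∑ j,
      (M i j ^ 2 - 2 * (M i j * N i j) + N i j ^ 2) from
    Finset.sum_congr rfl fun i _ => Finset.sum_congr rfl fun j _ => by ring]
  simp [Finset.sum_add_distrib, Finset.sum_sub_distrib, Finset.mul_sum]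

lemma frobSq_smul {a b : ℕ} (t : ℝ) (M : Matrix (Fin a) (Fin b) ℝ) :
    frobSq (t • M) = t ^ 2 * frobSq M := by
  simp [frobSq, Matrix.smul_apply, Finset.mul_sum, mul_pow]

lemma frobSq_transpose {a b : ℕ} (M : Matrix (Fin a) (Fin b) ℝ) :
    frobSq Mᵀ = frobSq M := by
  rw [frobSq, Finset.sum_comm]
  rfl

lemma ip_transpose {a b : ℕ} (M N : Matrix (Fin a) (Fin b) ℝ) : ip Mᵀ Nᵀ = ip M N := by
  rw [ip, Finset.sum_comm]
  rfl

lemma ip_mul_right {a b c : ℕ} (M : Matrix (Fin a) (Fin c) ℝ) (N : Matrix (Fin a) (Fin b) ℝ)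
    (B : Matrix (Fin b) (Fin c) ℝ) : ip M (N * B) = ip (M * Bᵀ) N := by
  simp only [ip, Matrix.mul_apply, Matrix.transpose_apply, Finset.mul_sum, Finset.sum_mul]
  refine Finset.sum_congr rfl fun i _ => ?_
  rw [Finset.sum_comm]
  exact Finset.sum_congr rfl fun x _ => Finset.sum_congr rfl fun y _ => by ring

end SIA
namespace SIA

variable {a b : ℕ} (Ω : Finset (Fin a × Fin b))

lemma proj_apply (Y : Matrix (Fin a) (Fin b) ℝ) (i j) :
    proj Ω Y i j = if (i, j) ∈ Ω then Y i j else 0 := rfl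

lemma projPerp_apply (Y : Matrix (Fin a) (Fin b) ℝ) (i j) :
    projPerp Ω Y i j = if (i, j) ∈ Ω then 0 else Y i j := rfl

lemma proj_sub (Y Z : Matrix (Fin a) (Fin b) ℝ) :
    proj Ω (Y - Z) = proj Ω Y - proj Ω Z := by
  ext i j
  simp only [proj_apply, Matrix.sub_apply]
  split <;> simp

lemma frobSq_proj_add_projPerp (M : Matrix (Fin a) (Fin b) ℝ) :
    frobSq M = frobSq (proj Ω M) + frobSq (projPerp Ω M) := by
  simp only [frobSq, proj_apply, projPerp_apply, ← Finset.sum_add_distrib]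
  refine Finset.sum_congr rfl fun i _ => Finset.sum_congr rfl fun j _ => ?_
  split <;> simp

lemma frobSq_projPerp_le (M : Matrix (Fin a) (Fin b) ℝ) :
    frobSq (projPerp Ω M) ≤ frobSq M := by
  rw [frobSq_proj_add_projPerp Ω M]
  have := frobSq_nonneg (proj Ω M)
  linarith

lemma ip_projPerp_self (M : Matrix (Fin a) (Fin b) ℝ) :
    ip M (projPerp Ω M) = frobSq (projPerp Ω M) := by
  simp only [ip, frobSq, projPerp_apply]
  refine Finset.sum_congr rfl fun i _ => Finset.sum_congr rfl fun j _ => ?_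
  split <;> simp [sq]

lemma projPerp_transpose (M : Matrix (Fin a) (Fin b) ℝ) :
    (projPerp Ω M)ᵀ = projPerp (Ω.image Prod.swap) Mᵀ := by
  ext j i
  simp only [Matrix.transpose_apply, projPerp_apply]
  have : (j, i) ∈ Ω.image Prod.swap ↔ (i, j) ∈ Ω := by
    constructor
    · rintro h
      obtain ⟨p, hp, hpe⟩ := Finset.mem_image.1 h
      obtain ⟨p1, p2⟩ := p
      cases hpe
      exact hp
    · intro h
      exact Finset.mem_image.2 ⟨(i, j), h, rfl⟩
  rw [if_congr this rfl rfl]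

end SIA
namespace SIA

/-- Quadratic expansion of the regularized least squares objective. -/
lemma g_expand {a b c : ℕ} (lam : ℝ) (Y : Matrix (Fin a) (Fin b) ℝ)
    (Bm : Matrix (Fin b) (Fin c) ℝ) (Ah D : Matrix (Fin a) (Fin c) ℝ) :
    (1/2) * frobSq (Y - (Ah + D) * Bmᵀ) + (lam/2) * frobSq (Ah + D)
      = ((1/2) * frobSq (Y - Ah * Bmᵀ) + (lam/2) * frobSq Ah)
        + ip (Ah * (Bmᵀ * Bm) + lam • Ah - Y * Bm) D
        + (1/2) * frobSq (D * Bmᵀ) + (lam/2) * frobSq D := by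
  have h1 : Y - (Ah + D) * Bmᵀ = (Y - Ah * Bmᵀ) - D * Bmᵀ := by
    rw [Matrix.add_mul]; abel
  rw [h1, frobSq_sub, frobSq_add]
  have h2 : ip (Y - Ah * Bmᵀ) (D * Bmᵀ) = ip ((Y - Ah * Bmᵀ) * Bm) D := by
    rw [ip_mul_right (Y - Ah * Bmᵀ) D Bmᵀ, Matrix.transpose_transpose, ip_comm]
  have h3 : (Y - Ah * Bmᵀ) * Bm = Y * Bm - Ah * (Bmᵀ * Bm) := by
    rw [Matrix.sub_mul, Matrix.mul_assoc]
  rw [h2, h3, ip_sub_left, sub_eq_add_neg (Ah * (Bmᵀ * Bm) + lam • Ah), ip_add_left,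
    ip_add_left, ip_smul_left]
  have : ip (-(Y * Bm)) D = - ip (Y * Bm) D := by
    simpa using ip_smul_left (-1) (Y * Bm) D
  rw [this]
  ring

/-- The minimizer of the regularized least squares objective satisfies the
normal equations. -/
lemma argmin_normal_eq {a b c : ℕ} {lam : ℝ} (hlam : 0 < lam)
    (Y : Matrix (Fin a) (Fin b) ℝ) (Bm : Matrix (Fin b) (Fin c) ℝ)
    (Ah : Matrix (Fin a) (Fin c) ℝ)
    (hmin : ∀ Z : Matrix (Fin a) (Fin c) ℝ,
      (1/2) * frobSq (Y - Ah * Bmᵀ) + (lam/2) * frobSq Ah ≤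
      (1/2) * frobSq (Y - Z * Bmᵀ) + (lam/2) * frobSq Z) :
    Ah * (Bmᵀ * Bm) + lam • Ah = Y * Bm := by
  set R := Ah * (Bmᵀ * Bm) + lam • Ah - Y * Bm with hR
  have key : ∀ D : Matrix (Fin a) (Fin c) ℝ, ip R D = 0 := by
    intro D
    set bq := ip R D with hbq
    set cq := (1/2) * frobSq (D * Bmᵀ) + (lam/2) * frobSq D with hcq
    have hc : 0 ≤ cq := by
      have := frobSq_nonneg (D * Bmᵀ); have := frobSq_nonneg D
      rw [hcq]; nlinarith
    have hexp : ∀ t : ℝ, 0 ≤ bq * t + cq * t ^ 2 := by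
      intro t
      have h := hmin (Ah + t • D)
      rw [g_expand lam Y Bm Ah (t • D)] at h
      rw [ip_smul_right, Matrix.smul_mul, frobSq_smul, frobSq_smul] at h
      rw [hbq, hcq]; nlinarith
    have hcp : (0:ℝ) < cq + 1 := by linarith
    set u := bq / (cq + 1) with hu
    have hub : bq = u * (cq + 1) := by
      rw [hu]; field_simp
    have h0 := hexp (-u)
    have : 0 ≤ -u ^ 2 := by
      have : bq * (-u) + cq * (-u) ^ 2 = -u ^ 2 * (cq + 1) + cq * u ^ 2 := by
        rw [hub]; ring
      nlinarith
    have hu0 : u = 0 := by nlinarith [sq_nonneg u]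
    rw [hub, hu0]; ring
  have hR0 : R = 0 := frobSq_eq_zero (by rw [← ip_self]; exact key R)
  have := sub_eq_zero.1 hR0
  exact this

/-- Strong-convexity decrease at the minimizer. -/
lemma argmin_decrease {a b c : ℕ} {lam : ℝ} (hlam : 0 < lam)
    (Y : Matrix (Fin a) (Fin b) ℝ) (Bm : Matrix (Fin b) (Fin c) ℝ)
    (Ah : Matrix (Fin a) (Fin c) ℝ)
    (hmin : ∀ Z : Matrix (Fin a) (Fin c) ℝ,
      (1/2) * frobSq (Y - Ah * Bmᵀ) + (lam/2) * frobSq Ah ≤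
      (1/2) * frobSq (Y - Z * Bmᵀ) + (lam/2) * frobSq Z) :
    ∀ Z : Matrix (Fin a) (Fin c) ℝ,
      (1/2) * frobSq (Y - Ah * Bmᵀ) + (lam/2) * frobSq Ah + (lam/2) * frobSq (Z - Ah) ≤
      (1/2) * frobSq (Y - Z * Bmᵀ) + (lam/2) * frobSq Z := by
  intro Z
  have hne := argmin_normal_eq hlam Y Bm Ah hmin
  have h := g_expand lam Y Bm Ah (Z - Ah)
  rw [add_sub_cancel] at h
  have hz : Ah * (Bmᵀ * Bm) + lam • Ah - Y * Bm = 0 := by rw [hne]; simp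
  rw [hz] at h
  have hip : ip (0 : Matrix (Fin a) (Fin c) ℝ) (Z - Ah) = 0 := by simp [ip]
  rw [hip] at h
  have := frobSq_nonneg ((Z - Ah) * Bmᵀ)
  linarith

end SIA
namespace SIA

variable {m n r : ℕ}

/-- `X* = P_Ω(X) + P_Ω^⊥(ABᵀ)`. -/
def Xs (Ω : Finset (Fin m × Fin n)) (X : Matrix (Fin m) (Fin n) ℝ)
    (A : Matrix (Fin m) (Fin r) ℝ) (B : Matrix (Fin n) (Fin r) ℝ) :
    Matrix (Fin m) (Fin n) ℝ := proj Ω X + projPerp Ω (A * Bᵀ)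

lemma QA_eq (Ω : Finset (Fin m × Fin n)) (X : Matrix (Fin m) (Fin n) ℝ) (lam : ℝ)
    (Z A : Matrix (Fin m) (Fin r) ℝ) (B : Matrix (Fin n) (Fin r) ℝ) :
    QA Ω X lam Z A B =
      (1/2) * frobSq (Xs Ω X A B - Z * Bᵀ) + (lam/2) * frobSq Z + (lam/2) * frobSq B := by
  have h : proj Ω (X - Z * Bᵀ) + projPerp Ω (A * Bᵀ - Z * Bᵀ) = Xs Ω X A B - Z * Bᵀ := by
    ext i j
    simp only [Matrix.add_apply, Matrix.sub_apply, proj_apply, projPerp_apply, Xs]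
    split <;> ring
  rw [QA, h]

lemma QB_eq (Ω : Finset (Fin m × Fin n)) (X : Matrix (Fin m) (Fin n) ℝ) (lam : ℝ)
    (Z : Matrix (Fin n) (Fin r) ℝ) (A : Matrix (Fin m) (Fin r) ℝ)
    (B : Matrix (Fin n) (Fin r) ℝ) :
    QB Ω X lam Z A B =
      (1/2) * frobSq ((Xs Ω X A B)ᵀ - Z * Aᵀ) + (lam/2) * frobSq Z + (lam/2) * frobSq A := by
  have h : proj Ω (X - A * Zᵀ) + projPerp Ω (A * Bᵀ - A * Zᵀ) = Xs Ω X A B - A * Zᵀ := by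
    ext i j
    simp only [Matrix.add_apply, Matrix.sub_apply, proj_apply, projPerp_apply, Xs]
    split <;> ring
  have h2 : frobSq (Xs Ω X A B - A * Zᵀ) = frobSq ((Xs Ω X A B)ᵀ - Z * Aᵀ) := by
    rw [← frobSq_transpose (Xs Ω X A B - A * Zᵀ), Matrix.transpose_sub, Matrix.transpose_mul,
      Matrix.transpose_transpose]
  rw [QB, h, h2]
  ring

/-- Majorization identity for `Q_A`. -/
lemma QA_F (Ω : Finset (Fin m × Fin n)) (X : Matrix (Fin m) (Fin n) ℝ) (lam : ℝ)
    (Z A : Matrix (Fin m) (Fin r) ℝ) (B : Matrix (Fin n) (Fin r) ℝ) :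
    QA Ω X lam Z A B =
      Fobj Ω X lam Z B + (1/2) * frobSq (projPerp Ω ((A - Z) * Bᵀ)) := by
  rw [QA_eq, frobSq_proj_add_projPerp Ω (Xs Ω X A B - Z * Bᵀ)]
  have h1 : proj Ω (Xs Ω X A B - Z * Bᵀ) = proj Ω (X - Z * Bᵀ) := by
    ext i j
    simp only [proj_apply, Matrix.sub_apply, Matrix.add_apply, Xs, projPerp_apply]
    split <;> simp_all
  have h2 : projPerp Ω (Xs Ω X A B - Z * Bᵀ) = projPerp Ω ((A - Z) * Bᵀ) := by
    ext i j
    simp only [projPerp_apply, Matrix.sub_apply, Matrix.add_apply, Xs, proj_apply,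
      Matrix.sub_mul]
    split <;> simp_all
  rw [h1, h2, Fobj]
  ring

/-- Majorization identity for `Q_B`. -/
lemma QB_F (Ω : Finset (Fin m × Fin n)) (X : Matrix (Fin m) (Fin n) ℝ) (lam : ℝ)
    (Z : Matrix (Fin n) (Fin r) ℝ) (A : Matrix (Fin m) (Fin r) ℝ)
    (B : Matrix (Fin n) (Fin r) ℝ) :
    QB Ω X lam Z A B =
      Fobj Ω X lam A Z + (1/2) * frobSq (projPerp Ω (A * (B - Z)ᵀ)) := by
  have h : proj Ω (X - A * Zᵀ) + projPerp Ω (A * Bᵀ - A * Zᵀ) = Xs Ω X A B - A * Zᵀ := by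
    ext i j
    simp only [Matrix.add_apply, Matrix.sub_apply, proj_apply, projPerp_apply, Xs]
    split <;> ring
  rw [QB, h, frobSq_proj_add_projPerp Ω (Xs Ω X A B - A * Zᵀ)]
  have h1 : proj Ω (Xs Ω X A B - A * Zᵀ) = proj Ω (X - A * Zᵀ) := by
    ext i j
    simp only [proj_apply, Matrix.sub_apply, Matrix.add_apply, Xs, projPerp_apply]
    split <;> simp_all
  have h2 : projPerp Ω (Xs Ω X A B - A * Zᵀ) = projPerp Ω (A * (B - Z)ᵀ) := by
    ext i j
    simp only [projPerp_apply, Matrix.sub_apply, Matrix.add_apply, Xs, proj_apply,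
      Matrix.transpose_sub, Matrix.mul_sub]
    split <;> simp_all
  rw [h1, h2, Fobj]
  ring

lemma Fobj_nonneg (Ω : Finset (Fin m × Fin n)) (X : Matrix (Fin m) (Fin n) ℝ) {lam : ℝ}
    (hlam : 0 < lam) (A : Matrix (Fin m) (Fin r) ℝ) (B : Matrix (Fin n) (Fin r) ℝ) :
    0 ≤ Fobj Ω X lam A B := by
  have h1 := frobSq_nonneg (proj Ω (X - A * Bᵀ))
  have h2 := frobSq_nonneg A
  have h3 := frobSq_nonneg B
  rw [Fobj]
  nlinarith

lemma Fobj_ge_A (Ω : Finset (Fin m × Fin n)) (X : Matrix (Fin m) (Fin n) ℝ) {lam : ℝ}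
    (hlam : 0 < lam) (A : Matrix (Fin m) (Fin r) ℝ) (B : Matrix (Fin n) (Fin r) ℝ) :
    (lam/2) * frobSq A ≤ Fobj Ω X lam A B ∧ (lam/2) * frobSq B ≤ Fobj Ω X lam A B := by
  have h1 := frobSq_nonneg (proj Ω (X - A * Bᵀ))
  have h2 := frobSq_nonneg A
  have h3 := frobSq_nonneg B
  rw [Fobj]
  constructor <;> nlinarith

end SIA
namespace SIA

variable {m n r : ℕ} {Ω : Finset (Fin m × Fin n)} {X : Matrix (Fin m) (Fin n) ℝ} {lam : ℝ}
  {A : ℕ → Matrix (Fin m) (Fin r) ℝ} {B : ℕ → Matrix (Fin n) (Fin r) ℝ}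

lemma hminA (hALS : SoftImputeALS Ω X lam A B) (k : ℕ) :
    ∀ Z : Matrix (Fin m) (Fin r) ℝ,
      (1/2) * frobSq (Xs Ω X (A k) (B k) - A (k+1) * (B k)ᵀ) + (lam/2) * frobSq (A (k+1)) ≤
      (1/2) * frobSq (Xs Ω X (A k) (B k) - Z * (B k)ᵀ) + (lam/2) * frobSq Z := by
  intro Z
  have h := (hALS k).1 Z
  rw [QA_eq, QA_eq] at h
  linarith

lemma hminB (hALS : SoftImputeALS Ω X lam A B) (k : ℕ) :
    ∀ Z : Matrix (Fin n) (Fin r) ℝ,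
      (1/2) * frobSq ((Xs Ω X (A (k+1)) (B k))ᵀ - B (k+1) * (A (k+1))ᵀ) +
          (lam/2) * frobSq (B (k+1)) ≤
      (1/2) * frobSq ((Xs Ω X (A (k+1)) (B k))ᵀ - Z * (A (k+1))ᵀ) + (lam/2) * frobSq Z := by
  intro Z
  have h := (hALS k).2 Z
  rw [QB_eq, QB_eq] at h
  linarith

lemma NA (hlam : 0 < lam) (hALS : SoftImputeALS Ω X lam A B) (k : ℕ) :
    A (k+1) * ((B k)ᵀ * B k) + lam • A (k+1) = Xs Ω X (A k) (B k) * B k :=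
  argmin_normal_eq hlam _ _ _ (hminA hALS k)

lemma NB (hlam : 0 < lam) (hALS : SoftImputeALS Ω X lam A B) (k : ℕ) :
    B (k+1) * ((A (k+1))ᵀ * A (k+1)) + lam • B (k+1) =
      (Xs Ω X (A (k+1)) (B k))ᵀ * A (k+1) := by
  exact argmin_normal_eq hlam _ _ _ (hminB hALS k)

lemma decreaseA (hlam : 0 < lam) (hALS : SoftImputeALS Ω X lam A B) (k : ℕ) :
    Fobj Ω X lam (A (k+1)) (B k) + (lam/2) * frobSq (A k - A (k+1)) ≤
      Fobj Ω X lam (A k) (B k) := by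
  have hd := argmin_decrease hlam _ _ _ (hminA hALS k) (A k)
  have e1 : QA Ω X lam (A k) (A k) (B k) = Fobj Ω X lam (A k) (B k) := by
    rw [QA_F]
    simp [frobSq, projPerp_apply]
  have e2 : Fobj Ω X lam (A (k+1)) (B k) ≤ QA Ω X lam (A (k+1)) (A k) (B k) := by
    rw [QA_F]
    have := frobSq_nonneg (projPerp Ω ((A k - A (k+1)) * (B k)ᵀ))
    linarith
  have hq : QA Ω X lam (A (k+1)) (A k) (B k) + (lam/2) * frobSq (A k - A (k+1)) ≤
      QA Ω X lam (A k) (A k) (B k) := by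
    rw [QA_eq, QA_eq]
    linarith
  linarith

lemma decreaseB (hlam : 0 < lam) (hALS : SoftImputeALS Ω X lam A B) (k : ℕ) :
    Fobj Ω X lam (A (k+1)) (B (k+1)) + (lam/2) * frobSq (B k - B (k+1)) ≤
      Fobj Ω X lam (A (k+1)) (B k) := by
  have hd := argmin_decrease hlam _ _ _ (hminB hALS k) (B k)
  have e1 : QB Ω X lam (B k) (A (k+1)) (B k) = Fobj Ω X lam (A (k+1)) (B k) := by
    rw [QB_F]
    simp [frobSq, projPerp_apply]
  have e2 : Fobj Ω X lam (A (k+1)) (B (k+1)) ≤ QB Ω X lam (B (k+1)) (A (k+1)) (B k) := by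
    rw [QB_F]
    have := frobSq_nonneg (projPerp Ω (A (k+1) * (B k - B (k+1))ᵀ))
    linarith
  have hq : QB Ω X lam (B (k+1)) (A (k+1)) (B k) + (lam/2) * frobSq (B k - B (k+1)) ≤
      QB Ω X lam (B k) (A (k+1)) (B k) := by
    rw [QB_eq, QB_eq]
    linarith
  linarith

lemma descent (hlam : 0 < lam) (hALS : SoftImputeALS Ω X lam A B) (k : ℕ) :
    Fobj Ω X lam (A (k+1)) (B (k+1)) +
        (lam/2) * (frobSq (A k - A (k+1)) + frobSq (B k - B (k+1))) ≤
      Fobj Ω X lam (A k) (B k) := by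
  have h1 := decreaseA hlam hALS k
  have h2 := decreaseB hlam hALS k
  nlinarith

end SIA
namespace SIA

instance matrixFirstCountable {a b : ℕ} :
    FirstCountableTopology (Matrix (Fin a) (Fin b) ℝ) :=
  inferInstanceAs (FirstCountableTopology (Fin a → Fin b → ℝ))

lemma sq_le_frobSq {a b : ℕ} (M : Matrix (Fin a) (Fin b) ℝ) (i : Fin a) (j : Fin b) :
    (M i j) ^ 2 ≤ frobSq M := by
  have h1 : (M i j) ^ 2 ≤ ∑ j', (M i j') ^ 2 :=
    Finset.single_le_sum (fun j' _ => sq_nonneg (M i j')) (Finset.mem_univ j)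
  have h2 : (∑ j', (M i j') ^ 2) ≤ ∑ i', ∑ j', (M i' j') ^ 2 :=
    Finset.single_le_sum (fun i' _ => Finset.sum_nonneg fun j' _ => sq_nonneg (M i' j'))
      (Finset.mem_univ i)
  exact le_trans h1 h2

lemma tendsto_zero_of_frobSq {a b : ℕ} {M : ℕ → Matrix (Fin a) (Fin b) ℝ}
    (h : Filter.Tendsto (fun k => frobSq (M k)) Filter.atTop (nhds 0)) :
    Filter.Tendsto M Filter.atTop (nhds 0) := by
  apply tendsto_pi_nhds.2
  intro i
  rw [tendsto_pi_nhds]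
  intro j
  have hsq : Filter.Tendsto (fun k => (M k i j) ^ 2) Filter.atTop (nhds 0) :=
    tendsto_of_tendsto_of_tendsto_of_le_of_le tendsto_const_nhds h
      (fun k => sq_nonneg _) (fun k => sq_le_frobSq (M k) i j)
  have habs : Filter.Tendsto (fun k => |M k i j|) Filter.atTop (nhds 0) := by
    have h2 := (Real.continuous_sqrt.tendsto 0).comp hsq
    simpa [Function.comp_def, Real.sqrt_sq_eq_abs] using h2
  have hneg : Filter.Tendsto (fun k => -|M k i j|) Filter.atTop (nhds 0) := by
    simpa using habs.neg
  have := tendsto_of_tendsto_of_tendsto_of_le_of_le hneg habs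
    (fun k => neg_abs_le (M k i j)) (fun k => le_abs_self (M k i j))
  simpa using this

variable {m n r : ℕ} {Ω : Finset (Fin m × Fin n)} {X : Matrix (Fin m) (Fin n) ℝ} {lam : ℝ}
  {A : ℕ → Matrix (Fin m) (Fin r) ℝ} {B : ℕ → Matrix (Fin n) (Fin r) ℝ}

lemma seq_facts (hlam : 0 < lam) (hALS : SoftImputeALS Ω X lam A B) :
    Filter.Tendsto (fun k => A (k+1) - A k) Filter.atTop (nhds 0) ∧
    Filter.Tendsto (fun k => B (k+1) - B k) Filter.atTop (nhds 0) ∧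
    (∀ k, 1 ≤ k → frobSq (A k) ≤ (2/lam) * Fobj Ω X lam (A 1) (B 1)) ∧
    (∀ k, 1 ≤ k → frobSq (B k) ≤ (2/lam) * Fobj Ω X lam (A 1) (B 1)) := by
  set u : ℕ → ℝ := fun k => Fobj Ω X lam (A k) (B k) with hu
  have hstep := descent hlam hALS
  have hanti : Antitone u := antitone_nat_of_succ_le fun k => by
    have h := hstep k
    have h1 := frobSq_nonneg (A k - A (k+1))
    have h2 := frobSq_nonneg (B k - B (k+1))
    nlinarith
  have hbdd : BddBelow (Set.range u) := by
    refine ⟨0, ?_⟩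
    rintro x ⟨k, rfl⟩
    exact Fobj_nonneg Ω X hlam (A k) (B k)
  have hconv : Filter.Tendsto u Filter.atTop (nhds (⨅ k, u k)) :=
    tendsto_atTop_ciInf hanti hbdd
  have hconv1 : Filter.Tendsto (fun k => u (k+1)) Filter.atTop (nhds (⨅ k, u k)) :=
    hconv.comp (Filter.tendsto_add_atTop_nat 1)
  have hdiff : Filter.Tendsto (fun k => u k - u (k+1)) Filter.atTop (nhds 0) := by
    simpa using hconv.sub hconv1
  have hsum : Filter.Tendsto
      (fun k => frobSq (A k - A (k+1)) + frobSq (B k - B (k+1))) Filter.atTop (nhds 0) := by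
    have hup : Filter.Tendsto (fun k => (2/lam) * (u k - u (k+1))) Filter.atTop (nhds 0) := by
      simpa using hdiff.const_mul (2/lam)
    refine tendsto_of_tendsto_of_tendsto_of_le_of_le tendsto_const_nhds hup ?_ ?_
    · intro k
      have h1 := frobSq_nonneg (A k - A (k+1))
      have h2 := frobSq_nonneg (B k - B (k+1))
      positivity
    · intro k
      have h := hstep k
      have h3 : (lam/2) * (frobSq (A k - A (k+1)) + frobSq (B k - B (k+1))) ≤ u k - u (k+1) := by
        simp only [hu] at h ⊢
        linarith
      simp only []
      rw [div_mul_eq_mul_div, le_div_iff₀ hlam]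
      nlinarith
  have hA0 : Filter.Tendsto (fun k => frobSq (A k - A (k+1))) Filter.atTop (nhds 0) := by
    refine tendsto_of_tendsto_of_tendsto_of_le_of_le tendsto_const_nhds hsum
      (fun k => frobSq_nonneg _) (fun k => ?_)
    have := frobSq_nonneg (B k - B (k+1))
    linarith
  have hB0 : Filter.Tendsto (fun k => frobSq (B k - B (k+1))) Filter.atTop (nhds 0) := by
    refine tendsto_of_tendsto_of_tendsto_of_le_of_le tendsto_const_nhds hsum
      (fun k => frobSq_nonneg _) (fun k => ?_)
    have := frobSq_nonneg (A k - A (k+1))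
    linarith
  refine ⟨?_, ?_, ?_, ?_⟩
  · have h := tendsto_zero_of_frobSq hA0
    have heq : (fun k => A (k+1) - A k) = fun k => -(A k - A (k+1)) := by
      funext k; rw [neg_sub]
    rw [heq]
    simpa using h.neg
  · have h := tendsto_zero_of_frobSq hB0
    have heq : (fun k => B (k+1) - B k) = fun k => -(B k - B (k+1)) := by
      funext k; rw [neg_sub]
    rw [heq]
    simpa using h.neg
  · intro k hk
    have h1 : u k ≤ u 1 := hanti hk
    have h2 := (Fobj_ge_A Ω X hlam (A k) (B k)).1
    have h3 : (lam/2) * frobSq (A k) ≤ Fobj Ω X lam (A 1) (B 1) := le_trans h2 h1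
    rw [div_mul_eq_mul_div, le_div_iff₀ hlam]
    nlinarith
  · intro k hk
    have h1 : u k ≤ u 1 := hanti hk
    have h2 := (Fobj_ge_A Ω X hlam (A k) (B k)).2
    have h3 : (lam/2) * frobSq (B k) ≤ Fobj Ω X lam (A 1) (B 1) := le_trans h2 h1
    rw [div_mul_eq_mul_div, le_div_iff₀ hlam]
    nlinarith

end SIA
namespace SIA

lemma continuous_projPerp {a b : ℕ} (Ω : Finset (Fin a × Fin b)) :
    Continuous fun Y : Matrix (Fin a) (Fin b) ℝ => projPerp Ω Y := by
  apply continuous_pi; intro i; apply continuous_pi; intro j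
  by_cases h : (i, j) ∈ Ω
  · simp only [projPerp_apply, if_pos h]
    exact continuous_const
  · simp only [projPerp_apply, if_neg h]
    exact (continuous_apply j).comp (continuous_apply i)

variable {m n r : ℕ} {Ω : Finset (Fin m × Fin n)} {X : Matrix (Fin m) (Fin n) ℝ} {lam : ℝ}
  {A : ℕ → Matrix (Fin m) (Fin r) ℝ} {B : ℕ → Matrix (Fin n) (Fin r) ℝ}

/-- Passing the A-update normal equation to the limit. -/
lemma limit_NA (hlam : 0 < lam) (hALS : SoftImputeALS Ω X lam A B)
    {Astar A1star : Matrix (Fin m) (Fin r) ℝ} {Bstar : Matrix (Fin n) (Fin r) ℝ} {σ : ℕ → ℕ}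
    (hA1 : Filter.Tendsto (fun k => A (σ k + 1)) Filter.atTop (nhds A1star))
    (hB : Filter.Tendsto (fun k => B (σ k)) Filter.atTop (nhds Bstar))
    (hA : Filter.Tendsto (fun k => A (σ k)) Filter.atTop (nhds Astar)) :
    A1star * (Bstarᵀ * Bstar) + lam • A1star =
      (proj Ω X + projPerp Ω (Astar * Bstarᵀ)) * Bstar := by
  set Φ : Matrix (Fin m) (Fin r) ℝ × Matrix (Fin n) (Fin r) ℝ × Matrix (Fin m) (Fin r) ℝ →
      Matrix (Fin m) (Fin r) ℝ :=
    fun p => p.1 * (p.2.1ᵀ * p.2.1) + lam • p.1 -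
      (proj Ω X + projPerp Ω (p.2.2 * p.2.1ᵀ)) * p.2.1 with hΦ
  have c1 : Continuous fun p : Matrix (Fin m) (Fin r) ℝ × Matrix (Fin n) (Fin r) ℝ ×
      Matrix (Fin m) (Fin r) ℝ => p.1 := continuous_fst
  have c2 : Continuous fun p : Matrix (Fin m) (Fin r) ℝ × Matrix (Fin n) (Fin r) ℝ ×
      Matrix (Fin m) (Fin r) ℝ => p.2.1 := continuous_fst.comp continuous_snd
  have c3 : Continuous fun p : Matrix (Fin m) (Fin r) ℝ × Matrix (Fin n) (Fin r) ℝ ×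
      Matrix (Fin m) (Fin r) ℝ => p.2.2 := continuous_snd.comp continuous_snd
  have hcont : Continuous Φ := by
    refine Continuous.sub (Continuous.add (c1.matrix_mul (c2.matrix_transpose.matrix_mul c2))
      (c1.const_smul lam)) (Continuous.matrix_mul ?_ c2)
    exact continuous_const.add ((continuous_projPerp Ω).comp
      (c3.matrix_mul c2.matrix_transpose))
  have hx : Filter.Tendsto (fun k => ((A (σ k + 1), (B (σ k), A (σ k))) :
      Matrix (Fin m) (Fin r) ℝ × Matrix (Fin n) (Fin r) ℝ × Matrix (Fin m) (Fin r) ℝ))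
      Filter.atTop (nhds (A1star, (Bstar, Astar))) :=
    hA1.prodMk_nhds (hB.prodMk_nhds hA)
  have hΦt := (hcont.tendsto _).comp hx
  have hzero : (fun k => Φ (A (σ k + 1), (B (σ k), A (σ k)))) = fun _ => (0 :
      Matrix (Fin m) (Fin r) ℝ) := by
    funext k
    have h := NA hlam hALS (σ k)
    rw [hΦ]
    dsimp only
    rw [Xs] at h
    rw [h]
    simp
  simp only [Function.comp_def] at hΦt
  rw [hzero] at hΦt
  have h0 : Φ (A1star, (Bstar, Astar)) = 0 := tendsto_nhds_unique hΦt tendsto_const_nhds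
  rw [hΦ] at h0
  dsimp only at h0
  exact sub_eq_zero.1 h0

/-- Passing the B-update normal equation to the limit. -/
lemma limit_NB (hlam : 0 < lam) (hALS : SoftImputeALS Ω X lam A B)
    {Astar : Matrix (Fin m) (Fin r) ℝ} {Bstar B1star : Matrix (Fin n) (Fin r) ℝ} {σ : ℕ → ℕ}
    (hB1 : Filter.Tendsto (fun k => B (σ k + 1)) Filter.atTop (nhds B1star))
    (hA1 : Filter.Tendsto (fun k => A (σ k + 1)) Filter.atTop (nhds Astar))
    (hB : Filter.Tendsto (fun k => B (σ k)) Filter.atTop (nhds Bstar)) :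
    B1star * (Astarᵀ * Astar) + lam • B1star =
      (proj Ω X + projPerp Ω (Astar * Bstarᵀ))ᵀ * Astar := by
  set Φ : Matrix (Fin n) (Fin r) ℝ × Matrix (Fin m) (Fin r) ℝ × Matrix (Fin n) (Fin r) ℝ →
      Matrix (Fin n) (Fin r) ℝ :=
    fun p => p.1 * (p.2.1ᵀ * p.2.1) + lam • p.1 -
      (proj Ω X + projPerp Ω (p.2.1 * p.2.2ᵀ))ᵀ * p.2.1 with hΦ
  have c1 : Continuous fun p : Matrix (Fin n) (Fin r) ℝ × Matrix (Fin m) (Fin r) ℝ ×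
      Matrix (Fin n) (Fin r) ℝ => p.1 := continuous_fst
  have c2 : Continuous fun p : Matrix (Fin n) (Fin r) ℝ × Matrix (Fin m) (Fin r) ℝ ×
      Matrix (Fin n) (Fin r) ℝ => p.2.1 := continuous_fst.comp continuous_snd
  have c3 : Continuous fun p : Matrix (Fin n) (Fin r) ℝ × Matrix (Fin m) (Fin r) ℝ ×
      Matrix (Fin n) (Fin r) ℝ => p.2.2 := continuous_snd.comp continuous_snd
  have hcont : Continuous Φ := by
    refine Continuous.sub (Continuous.add (c1.matrix_mul (c2.matrix_transpose.matrix_mul c2))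
      (c1.const_smul lam)) (Continuous.matrix_mul ?_ c2)
    exact (continuous_const.add ((continuous_projPerp Ω).comp
      (c2.matrix_mul c3.matrix_transpose))).matrix_transpose
  have hx : Filter.Tendsto (fun k => ((B (σ k + 1), (A (σ k + 1), B (σ k))) :
      Matrix (Fin n) (Fin r) ℝ × Matrix (Fin m) (Fin r) ℝ × Matrix (Fin n) (Fin r) ℝ))
      Filter.atTop (nhds (B1star, (Astar, Bstar))) :=
    hB1.prodMk_nhds (hA1.prodMk_nhds hB)
  have hΦt := (hcont.tendsto _).comp hx
  have hzero : (fun k => Φ (B (σ k + 1), (A (σ k + 1), B (σ k)))) = fun _ => (0 :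
      Matrix (Fin n) (Fin r) ℝ) := by
    funext k
    have h := NB hlam hALS (σ k)
    rw [hΦ]
    dsimp only
    rw [Xs] at h
    rw [h]
    simp
  simp only [Function.comp_def] at hΦt
  rw [hzero] at hΦt
  have h0 : Φ (B1star, (Astar, Bstar)) = 0 := tendsto_nhds_unique hΦt tendsto_const_nhds
  rw [hΦ] at h0
  dsimp only at h0
  exact sub_eq_zero.1 h0

end SIA
namespace SIA

lemma ip_add_right {a b : ℕ} (M P Q : Matrix (Fin a) (Fin b) ℝ) :
    ip M (P + Q) = ip M P + ip M Q := by
  rw [ip_comm, ip_add_left, ip_comm P M, ip_comm Q M]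

lemma projPerp_sub {a b : ℕ} (Ω : Finset (Fin a × Fin b)) (Y Z : Matrix (Fin a) (Fin b) ℝ) :
    projPerp Ω (Y - Z) = projPerp Ω Y - projPerp Ω Z := by
  ext i j
  simp only [projPerp_apply, Matrix.sub_apply]
  split <;> simp

variable {m n r : ℕ} {Ω : Finset (Fin m × Fin n)} {X : Matrix (Fin m) (Fin n) ℝ} {lam : ℝ}

lemma fpA_unique (hlam : 0 < lam) (Bstar : Matrix (Fin n) (Fin r) ℝ)
    {A1 A2 : Matrix (Fin m) (Fin r) ℝ}
    (h1 : A1 * (Bstarᵀ * Bstar) + lam • A1 = (proj Ω X + projPerp Ω (A1 * Bstarᵀ)) * Bstar)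
    (h2 : A2 * (Bstarᵀ * Bstar) + lam • A2 = (proj Ω X + projPerp Ω (A2 * Bstarᵀ)) * Bstar) :
    A1 = A2 := by
  set D := A1 - A2 with hD
  have hDeq : D * (Bstarᵀ * Bstar) + lam • D = projPerp Ω (D * Bstarᵀ) * Bstar := by
    calc D * (Bstarᵀ * Bstar) + lam • D
        = (A1 * (Bstarᵀ * Bstar) + lam • A1) - (A2 * (Bstarᵀ * Bstar) + lam • A2) := by
          rw [hD, Matrix.sub_mul, smul_sub]; abel
      _ = (proj Ω X + projPerp Ω (A1 * Bstarᵀ)) * Bstar -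
            (proj Ω X + projPerp Ω (A2 * Bstarᵀ)) * Bstar := by rw [h1, h2]
      _ = projPerp Ω (D * Bstarᵀ) * Bstar := by
          rw [← Matrix.sub_mul, add_sub_add_left_eq_sub, ← projPerp_sub, hD, Matrix.sub_mul]
  have hip := congrArg (fun M => ip D M) hDeq
  rw [ip_add_right, ip_smul_right, ip_self, ← Matrix.mul_assoc, ip_mul_right, ip_self,
    ip_mul_right, ip_projPerp_self] at hip
  have hle := frobSq_projPerp_le Ω (D * Bstarᵀ)
  have hD0 : frobSq D = 0 := by nlinarith [frobSq_nonneg D]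
  have h0 := frobSq_eq_zero hD0
  rw [hD] at h0
  exact sub_eq_zero.1 h0

lemma fpB_unique (hlam : 0 < lam) (Astar : Matrix (Fin m) (Fin r) ℝ)
    {B1 B2 : Matrix (Fin n) (Fin r) ℝ}
    (h1 : B1 * (Astarᵀ * Astar) + lam • B1 = (proj Ω X + projPerp Ω (Astar * B1ᵀ))ᵀ * Astar)
    (h2 : B2 * (Astarᵀ * Astar) + lam • B2 = (proj Ω X + projPerp Ω (Astar * B2ᵀ))ᵀ * Astar) :
    B1 = B2 := by
  set D := B1 - B2 with hD
  have hDeq : D * (Astarᵀ * Astar) + lam • D = (projPerp Ω (Astar * Dᵀ))ᵀ * Astar := by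
    calc D * (Astarᵀ * Astar) + lam • D
        = (B1 * (Astarᵀ * Astar) + lam • B1) - (B2 * (Astarᵀ * Astar) + lam • B2) := by
          rw [hD, Matrix.sub_mul, smul_sub]; abel
      _ = (proj Ω X + projPerp Ω (Astar * B1ᵀ))ᵀ * Astar -
            (proj Ω X + projPerp Ω (Astar * B2ᵀ))ᵀ * Astar := by rw [h1, h2]
      _ = (projPerp Ω (Astar * Dᵀ))ᵀ * Astar := by
          rw [← Matrix.sub_mul, ← Matrix.transpose_sub, add_sub_add_left_eq_sub,
            ← projPerp_sub, ← Matrix.mul_sub, ← Matrix.transpose_sub, hD]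
  have hip := congrArg (fun M => ip D M) hDeq
  have htr : D * Astarᵀ = (Astar * Dᵀ)ᵀ := by
    rw [Matrix.transpose_mul, Matrix.transpose_transpose]
  rw [ip_add_right, ip_smul_right, ip_self, ← Matrix.mul_assoc, ip_mul_right, ip_self,
    ip_mul_right, htr, ip_transpose, ip_projPerp_self] at hip
  have hle := frobSq_projPerp_le Ω (Astar * Dᵀ)
  have hfr : frobSq ((Astar * Dᵀ)ᵀ) = frobSq (Astar * Dᵀ) := frobSq_transpose _
  have hD0 : frobSq D = 0 := by nlinarith [frobSq_nonneg D]
  have h0 := frobSq_eq_zero hD0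
  rw [hD] at h0
  exact sub_eq_zero.1 h0

end SIA
open SIA

theorem softImputeALS_limit_points {m n r : ℕ} (Ω : Finset (Fin m × Fin n))
    (X : Matrix (Fin m) (Fin n) ℝ) (lam : ℝ) (hlam : 0 < lam)
    (A : ℕ → Matrix (Fin m) (Fin r) ℝ) (B : ℕ → Matrix (Fin n) (Fin r) ℝ)
    (hALS : SoftImputeALS Ω X lam A B) :
    -- (a) every limit point of (A_k, B_k) is a first-order stationary point of F
    (∀ (Astar : Matrix (Fin m) (Fin r) ℝ) (Bstar : Matrix (Fin n) (Fin r) ℝ)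
        (φ : ℕ → ℕ), StrictMono φ →
        Tendsto (fun k => (A (φ k), B (φ k))) atTop (nhds (Astar, Bstar)) →
        proj Ω (Astar * Bstarᵀ - X) * Bstar + lam • Astar = 0 ∧
        (proj Ω (Astar * Bstarᵀ - X))ᵀ * Astar + lam • Bstar = 0) ∧
    -- (b) if B_k → B* along a subsequence, then A_k converges along it
    (∀ (Bstar : Matrix (Fin n) (Fin r) ℝ) (φ : ℕ → ℕ), StrictMono φ →
        Tendsto (fun k => B (φ k)) atTop (nhds Bstar) →
        ∃ Astar : Matrix (Fin m) (Fin r) ℝ,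
          Tendsto (fun k => A (φ k)) atTop (nhds Astar)) ∧
    -- symmetrically, if A_k → A* along a subsequence, then B_k converges along it
    (∀ (Astar : Matrix (Fin m) (Fin r) ℝ) (φ : ℕ → ℕ), StrictMono φ →
        Tendsto (fun k => A (φ k)) atTop (nhds Astar) →
        ∃ Bstar : Matrix (Fin n) (Fin r) ℝ,
          Tendsto (fun k => B (φ k)) atTop (nhds Bstar)) := by
  obtain ⟨hdA, hdB, hbA, hbB⟩ := seq_facts hlam hALS
  -- limits pass to successor indices
  have succA : ∀ (τ : ℕ → ℕ), Tendsto τ atTop atTop →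
      ∀ L : Matrix (Fin m) (Fin r) ℝ, Tendsto (fun k => A (τ k)) atTop (nhds L) →
      Tendsto (fun k => A (τ k + 1)) atTop (nhds L) := by
    intro τ hτ L hL
    have h0 : Tendsto (fun k => A (τ k + 1) - A (τ k)) atTop (nhds 0) := hdA.comp hτ
    have h1 := hL.add h0
    have heq : (fun k => A (τ k) + (A (τ k + 1) - A (τ k))) = fun k => A (τ k + 1) := by
      funext k; abel
    rw [heq] at h1
    simpa using h1
  have succB : ∀ (τ : ℕ → ℕ), Tendsto τ atTop atTop →
      ∀ L : Matrix (Fin n) (Fin r) ℝ, Tendsto (fun k => B (τ k)) atTop (nhds L) →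
      Tendsto (fun k => B (τ k + 1)) atTop (nhds L) := by
    intro τ hτ L hL
    have h0 : Tendsto (fun k => B (τ k + 1) - B (τ k)) atTop (nhds 0) := hdB.comp hτ
    have h1 := hL.add h0
    have heq : (fun k => B (τ k) + (B (τ k + 1) - B (τ k))) = fun k => B (τ k + 1) := by
      funext k; abel
    rw [heq] at h1
    simpa using h1
  have hsplit : ∀ M : Matrix (Fin m) (Fin n) ℝ, proj Ω M = M - projPerp Ω M := by
    intro M
    ext i j
    simp only [proj_apply, projPerp_apply, Matrix.sub_apply]
    split <;> simp
  refine ⟨?_, ?_, ?_⟩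
  · -- (a)
    intro Astar Bstar φ hφ hconv
    have hA : Tendsto (fun k => A (φ k)) atTop (nhds Astar) := by
      have := (continuous_fst.tendsto ((Astar, Bstar) :
        Matrix (Fin m) (Fin r) ℝ × Matrix (Fin n) (Fin r) ℝ)).comp hconv
      simpa [Function.comp_def] using this
    have hB : Tendsto (fun k => B (φ k)) atTop (nhds Bstar) := by
      have := (continuous_snd.tendsto ((Astar, Bstar) :
        Matrix (Fin m) (Fin r) ℝ × Matrix (Fin n) (Fin r) ℝ)).comp hconv
      simpa [Function.comp_def] using this
    have hτ : Tendsto φ atTop atTop := hφ.tendsto_atTop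
    have hA1 := succA φ hτ Astar hA
    have hB1 := succB φ hτ Bstar hB
    have eqA := limit_NA hlam hALS hA1 hB hA
    have eqB := limit_NB hlam hALS hB1 hA1 hB
    have e : proj Ω (Astar * Bstarᵀ - X) =
        Astar * Bstarᵀ - projPerp Ω (Astar * Bstarᵀ) - proj Ω X := by
      rw [proj_sub, hsplit (Astar * Bstarᵀ)]
    constructor
    · rw [e, Matrix.sub_mul, Matrix.sub_mul]
      rw [Matrix.add_mul] at eqA
      calc Astar * Bstarᵀ * Bstar - projPerp Ω (Astar * Bstarᵀ) * Bstar -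
            proj Ω X * Bstar + lam • Astar
          = (Astar * (Bstarᵀ * Bstar) + lam • Astar) -
              (proj Ω X * Bstar + projPerp Ω (Astar * Bstarᵀ) * Bstar) := by
            rw [Matrix.mul_assoc]; abel
        _ = 0 := by rw [eqA]; exact sub_self _
    · rw [e, Matrix.transpose_sub, Matrix.transpose_sub, Matrix.transpose_mul,
        Matrix.transpose_transpose, Matrix.sub_mul, Matrix.sub_mul]
      rw [Matrix.transpose_add, Matrix.add_mul] at eqB
      calc Bstar * Astarᵀ * Astar - (projPerp Ω (Astar * Bstarᵀ))ᵀ * Astar -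
            (proj Ω X)ᵀ * Astar + lam • Bstar
          = (Bstar * (Astarᵀ * Astar) + lam • Bstar) -
              ((proj Ω X)ᵀ * Astar + (projPerp Ω (Astar * Bstarᵀ))ᵀ * Astar) := by
            rw [Matrix.mul_assoc]; abel
        _ = 0 := by rw [eqB]; exact sub_self _
  · -- (b)
    intro Bstar φ hφ hB
    set C := (2/lam) * Fobj Ω X lam (A 1) (B 1) with hC
    have hC0 : 0 ≤ C :=
      mul_nonneg (by positivity) (Fobj_nonneg Ω X hlam (A 1) (B 1))
    set c := Real.sqrt C with hc
    set S : Set (Matrix (Fin m) (Fin r) ℝ) :=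
      Set.univ.pi fun _ : Fin m => Set.univ.pi fun _ : Fin r => Set.Icc (-c) c with hS
    have hScomp : IsCompact S :=
      isCompact_univ_pi fun _ => isCompact_univ_pi fun _ => isCompact_Icc
    have memS : ∀ j : ℕ, 1 ≤ j → A j ∈ S := by
      intro j hj
      rw [hS]; refine Set.mem_univ_pi.2 ?_
      intro i
      rw [Set.mem_univ_pi]
      intro a
      have h1 : (A j i a) ^ 2 ≤ C := le_trans (sq_le_frobSq (A j) i a) (hbA j hj)
      have h2 : c ^ 2 = C := Real.sq_sqrt hC0
      have h3 : 0 ≤ c := Real.sqrt_nonneg C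
      constructor
      · nlinarith
      · nlinarith
    have key : ∀ σ : ℕ → ℕ, Tendsto σ atTop atTop →
        ∀ L : Matrix (Fin m) (Fin r) ℝ,
        Tendsto (fun k => A (φ (σ k))) atTop (nhds L) →
        L * (Bstarᵀ * Bstar) + lam • L =
          (proj Ω X + projPerp Ω (L * Bstarᵀ)) * Bstar := by
      intro σ hσ L hL
      have hBσ : Tendsto (fun k => B (φ (σ k))) atTop (nhds Bstar) := hB.comp hσ
      have hτ : Tendsto (fun k => φ (σ k)) atTop atTop := hφ.tendsto_atTop.comp hσ
      have hA1 := succA (fun k => φ (σ k)) hτ L hL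
      exact limit_NA hlam hALS hA1 hBσ hL
    obtain ⟨Astar, -, ψ, hψ, hψt⟩ := hScomp.tendsto_subseq
      (x := fun k => A (φ (k + 1)))
      (fun k => memS _ (le_trans (Nat.succ_le_succ (Nat.zero_le k)) (hφ.le_apply)))
    have hFPstar : Astar * (Bstarᵀ * Bstar) + lam • Astar =
        (proj Ω X + projPerp Ω (Astar * Bstarᵀ)) * Bstar := by
      refine key (fun k => ψ k + 1) ?_ Astar hψt
      exact (tendsto_add_atTop_nat 1).comp hψ.tendsto_atTop
    refine ⟨Astar, ?_⟩
    apply Filter.tendsto_of_subseq_tendsto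
    intro ns hns
    obtain ⟨N, hN⟩ := Filter.eventually_atTop.1 (hns.eventually_ge_atTop 1)
    obtain ⟨A2, -, ms, hms, hmst⟩ := hScomp.tendsto_subseq
      (x := fun k => A (φ (ns (k + N))))
      (fun k => memS _ (le_trans (hN _ (Nat.le_add_left N k)) (hφ.le_apply)))
    have hFP2 : A2 * (Bstarᵀ * Bstar) + lam • A2 =
        (proj Ω X + projPerp Ω (A2 * Bstarᵀ)) * Bstar := by
      refine key (fun k => ns (ms k + N)) ?_ A2 hmst
      exact hns.comp ((tendsto_add_atTop_nat N).comp hms.tendsto_atTop)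
    have hAe : A2 = Astar := fpA_unique hlam Bstar hFP2 hFPstar
    exact ⟨fun k => ms k + N, hAe ▸ hmst⟩
  · -- (c)
    intro Astar φ hφ hA
    set C := (2/lam) * Fobj Ω X lam (A 1) (B 1) with hC
    have hC0 : 0 ≤ C :=
      mul_nonneg (by positivity) (Fobj_nonneg Ω X hlam (A 1) (B 1))
    set c := Real.sqrt C with hc
    set S : Set (Matrix (Fin n) (Fin r) ℝ) :=
      Set.univ.pi fun _ : Fin n => Set.univ.pi fun _ : Fin r => Set.Icc (-c) c with hS
    have hScomp : IsCompact S :=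
      isCompact_univ_pi fun _ => isCompact_univ_pi fun _ => isCompact_Icc
    have memS : ∀ j : ℕ, 1 ≤ j → B j ∈ S := by
      intro j hj
      rw [hS]; refine Set.mem_univ_pi.2 ?_
      intro i
      rw [Set.mem_univ_pi]
      intro a
      have h1 : (B j i a) ^ 2 ≤ C := le_trans (sq_le_frobSq (B j) i a) (hbB j hj)
      have h2 : c ^ 2 = C := Real.sq_sqrt hC0
      have h3 : 0 ≤ c := Real.sqrt_nonneg C
      constructor
      · nlinarith
      · nlinarith
    have key : ∀ σ : ℕ → ℕ, Tendsto σ atTop atTop →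
        ∀ L : Matrix (Fin n) (Fin r) ℝ,
        Tendsto (fun k => B (φ (σ k))) atTop (nhds L) →
        L * (Astarᵀ * Astar) + lam • L =
          (proj Ω X + projPerp Ω (Astar * Lᵀ))ᵀ * Astar := by
      intro σ hσ L hL
      have hτ : Tendsto (fun k => φ (σ k)) atTop atTop := hφ.tendsto_atTop.comp hσ
      have hAσ : Tendsto (fun k => A (φ (σ k))) atTop (nhds Astar) := hA.comp hσ
      have hA1 := succA (fun k => φ (σ k)) hτ Astar hAσ
      have hB1 := succB (fun k => φ (σ k)) hτ L hL
      exact limit_NB hlam hALS hB1 hA1 hL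
    obtain ⟨Bstar, -, ψ, hψ, hψt⟩ := hScomp.tendsto_subseq
      (x := fun k => B (φ (k + 1)))
      (fun k => memS _ (le_trans (Nat.succ_le_succ (Nat.zero_le k)) (hφ.le_apply)))
    have hFPstar : Bstar * (Astarᵀ * Astar) + lam • Bstar =
        (proj Ω X + projPerp Ω (Astar * Bstarᵀ))ᵀ * Astar := by
      refine key (fun k => ψ k + 1) ?_ Bstar hψt
      exact (tendsto_add_atTop_nat 1).comp hψ.tendsto_atTop
    refine ⟨Bstar, ?_⟩
    apply Filter.tendsto_of_subseq_tendsto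
    intro ns hns
    obtain ⟨N, hN⟩ := Filter.eventually_atTop.1 (hns.eventually_ge_atTop 1)
    obtain ⟨B2, -, ms, hms, hmst⟩ := hScomp.tendsto_subseq
      (x := fun k => B (φ (ns (k + N))))
      (fun k => memS _ (le_trans (hN _ (Nat.le_add_left N k)) (hφ.le_apply)))
    have hFP2 : B2 * (Astarᵀ * Astar) + lam • B2 =
        (proj Ω X + projPerp Ω (Astar * B2ᵀ))ᵀ * Astar := by
      refine key (fun k => ns (ms k + N)) ?_ B2 hmst
      exact hns.comp ((tendsto_add_atTop_nat N).comp hms.tendsto_atTop)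
    have hBe : B2 = Bstar := fpB_unique hlam Astar hFP2 hFPstar
    exact ⟨fun k => ms k + N, hBe ▸ hmst⟩

end
end

section
/- For any m×r matrix A and n×r matrix B, F(A,B) ≥ H(ABᵀ), where F(A,B) := (1/2)‖P_Ω(X − ABᵀ)‖_F² + (λ/2)(‖A‖_F² + ‖B‖_F²) and H(M) := (1/2)‖P_Ω(X − M)‖_F² + λ‖M‖_*. Moreover, equality F(A,B) = H(ABᵀ) holds when A = UD^{1/2} and B = VD^{1/2}, where UDVᵀ is a singular value decomposition of ABᵀ. Consequently, if the softImpute-ALS iterates (A_k,B_k) are re-parametrized after each iteration to this SVD form (which leaves A_kB_kᵀ and the training-error term unchanged and does not increase F), then the sequence H(A_kB_kᵀ) is monotonically decreasing: H(A_kB_kᵀ) ≥ H(A_{k+1}B_{k+1}ᵀ) for all k, with H(A_kB_kᵀ) = F(A_k,B_k). -/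
noncomputable section

open Matrix Filter

/-- Nuclear norm: sum of the singular values, i.e. of the square roots of the
eigenvalues of `Zᴴ * Z`. -/
def nuclearNorm {m n : ℕ} (Z : Matrix (Fin m) (Fin n) ℝ) : ℝ :=
  ∑ i, Real.sqrt ((Matrix.isHermitian_conjTranspose_mul_self Z).eigenvalues i)

/-- `H(M) = (1/2)‖P_Ω(X − M)‖_F² + λ‖M‖_*`. -/
def Hobj {m n : ℕ} (Ω : Finset (Fin m × Fin n)) (X : Matrix (Fin m) (Fin n) ℝ) (lam : ℝ)
    (M : Matrix (Fin m) (Fin n) ℝ) : ℝ :=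
  (1 / 2) * frobSq (proj Ω (X - M)) + lam * nuclearNorm M

/-- `(A, B)` is in SVD form: `A = U D^{1/2}` and `B = V D^{1/2}` where `U D Vᵀ` is an SVD
of `A Bᵀ`. -/
def SVDForm {m n r : ℕ} (A : Matrix (Fin m) (Fin r) ℝ) (B : Matrix (Fin n) (Fin r) ℝ) : Prop :=
  ∃ (U : Matrix (Fin m) (Fin r) ℝ) (d : Fin r → ℝ) (V : Matrix (Fin n) (Fin r) ℝ),
    Uᵀ * U = 1 ∧ Vᵀ * V = 1 ∧ (∀ i, 0 ≤ d i) ∧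
    A = U * Matrix.diagonal (fun i => Real.sqrt (d i)) ∧
    B = V * Matrix.diagonal (fun i => Real.sqrt (d i))


-- Auxiliary lemmas --------------------------------------------------------

lemma frobSq_nonneg {m n : ℕ} (M : Matrix (Fin m) (Fin n) ℝ) : 0 ≤ frobSq M := by
  unfold frobSq; positivity

lemma frobSq_eq_trace {m n : ℕ} (M : Matrix (Fin m) (Fin n) ℝ) :
    frobSq M = Matrix.trace (Mᵀ * M) := by
  unfold frobSq Matrix.trace
  rw [Finset.sum_comm]
  refine Finset.sum_congr rfl fun j _ => ?_
  simp [Matrix.mul_apply, Matrix.diag, pow_two]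

/-- Key nuclear norm inequality: `‖ABᵀ‖_* ≤ (‖A‖_F² + ‖B‖_F²)/2`. -/
lemma nuclearNorm_le {m n r : ℕ} (A : Matrix (Fin m) (Fin r) ℝ) (B : Matrix (Fin n) (Fin r) ℝ) :
    nuclearNorm (A * Bᵀ) ≤ (frobSq A + frobSq B) / 2 := by
  show (∑ i, Real.sqrt ((Matrix.isHermitian_conjTranspose_mul_self (A * Bᵀ)).eigenvalues i))
      ≤ (frobSq A + frobSq B) / 2
  set M : Matrix (Fin m) (Fin n) ℝ := A * Bᵀ with hM
  set hH : IsHermitian (Mᵀ * M) := isHermitian_conjTranspose_mul_self M with hhH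
  have hpsd : PosSemidef (Mᵀ * M) := by
    have := posSemidef_conjTranspose_mul_self M
    rwa [conjTranspose_eq_transpose_of_trivial] at this
  set lam : Fin n → ℝ := hH.eigenvalues with hlam
  have hlam_nonneg : ∀ i, 0 ≤ lam i := fun i => hpsd.eigenvalues_nonneg i
  set V : Matrix (Fin n) (Fin n) ℝ := (hH.eigenvectorUnitary : Matrix (Fin n) (Fin n) ℝ) with hV
  have hV1 : Vᵀ * V = 1 := by
    have h := Unitary.coe_star_mul_self hH.eigenvectorUnitary
    rwa [Matrix.star_eq_conjTranspose, conjTranspose_eq_transpose_of_trivial] at h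
  have hV2 : V * Vᵀ = 1 := by
    have h := Unitary.coe_mul_star_self hH.eigenvectorUnitary
    rwa [Unitary.coe_star, Matrix.star_eq_conjTranspose,
      conjTranspose_eq_transpose_of_trivial] at h
  have spec : Mᵀ * M = V * diagonal lam * Vᵀ := by
    have h := hH.spectral_theorem
    rw [Unitary.conjStarAlgAut_apply, Matrix.star_eq_conjTranspose, conjTranspose_eq_transpose_of_trivial] at h
    have hdg : (diagonal (RCLike.ofReal ∘ hH.eigenvalues) : Matrix (Fin n) (Fin n) ℝ)
        = diagonal lam := by congr 1
    rwa [hdg] at h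
  set N : Matrix (Fin m) (Fin n) ℝ := M * V with hN
  have hNN : Nᵀ * N = diagonal lam := by
    rw [hN, transpose_mul, Matrix.mul_assoc Vᵀ Mᵀ, ← Matrix.mul_assoc Mᵀ M V,
      ← Matrix.mul_assoc Vᵀ (Mᵀ * M) V, spec,
      show Vᵀ * (V * diagonal lam * Vᵀ) * V = (Vᵀ * V) * diagonal lam * (Vᵀ * V) by
        noncomm_ring,
      hV1, one_mul, mul_one]
  set g : Fin n → ℝ := fun i => if lam i = 0 then 0 else (Real.sqrt (lam i))⁻¹ with hg
  set U : Matrix (Fin m) (Fin n) ℝ := N * diagonal g with hU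
  have hUU : Uᵀ * U = diagonal (fun i => if lam i = 0 then (0:ℝ) else 1) := by
    rw [hU, transpose_mul, diagonal_transpose, Matrix.mul_assoc (diagonal g) Nᵀ,
      ← Matrix.mul_assoc Nᵀ N (diagonal g), hNN, diagonal_mul_diagonal,
      diagonal_mul_diagonal]
    refine congrArg diagonal (funext fun i => ?_)
    by_cases h : lam i = 0
    · simp [hg, h]
    · have hms : Real.sqrt (lam i) * Real.sqrt (lam i) = lam i :=
        Real.mul_self_sqrt (hlam_nonneg i)
      have hs : Real.sqrt (lam i) ≠ 0 := fun h0 => h (by rw [← hms, h0, mul_zero])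
      simp only [hg, h, if_false]
      field_simp
      exact (Real.sq_sqrt (hlam_nonneg i)).symm
  have hUdiag : U * diagonal (fun i => if lam i = 0 then (0:ℝ) else 1) = U := by
    have hge : (fun i => g i * (if lam i = 0 then (0:ℝ) else 1)) = g :=
      funext fun i => by by_cases h : lam i = 0 <;> simp [hg, h]
    rw [hU, Matrix.mul_assoc, diagonal_mul_diagonal, hge]
  have hkey : ∀ i, Real.sqrt (lam i) = ∑ k, (Uᵀ * A) i k * (Vᵀ * B) i k := by
    intro i
    have h1 : (Uᵀ * N) i i = Real.sqrt (lam i) := by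
      rw [hU, transpose_mul, diagonal_transpose, Matrix.mul_assoc, hNN,
        diagonal_mul_diagonal]
      by_cases h : lam i = 0
      · simp [h, hg]
      · simp only [diagonal_apply_eq, hg, h, if_false]
        rw [inv_mul_eq_div, Real.div_sqrt]
    have h2 : Uᵀ * N = (Uᵀ * A) * (Vᵀ * B)ᵀ := by
      simp only [hN, hM, transpose_mul, transpose_transpose, ← Matrix.mul_assoc]
    rw [← h1, h2, Matrix.mul_apply]
    exact Finset.sum_congr rfl fun k _ => by simp
  have hfrobB : frobSq (Vᵀ * B) = frobSq B := by
    rw [frobSq_eq_trace (Vᵀ * B), frobSq_eq_trace B, transpose_mul, transpose_transpose,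
      Matrix.mul_assoc Bᵀ V (Vᵀ * B), ← Matrix.mul_assoc V Vᵀ B, hV2, Matrix.one_mul]
  have hfrobA : frobSq (Uᵀ * A) ≤ frobSq A := by
    set P : Matrix (Fin m) (Fin m) ℝ := U * Uᵀ with hP
    have hPsymm : Pᵀ = P := by rw [hP, transpose_mul, transpose_transpose]
    have hPP : P * P = P := by
      rw [hP, Matrix.mul_assoc, ← Matrix.mul_assoc Uᵀ U Uᵀ, hUU, ← Matrix.mul_assoc,
        hUdiag]
    have hQ : (1 - P)ᵀ = 1 - P := by rw [transpose_sub, transpose_one, hPsymm]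
    have hQQ : (1 - P) * (1 - P) = 1 - P := by
      rw [show (1 - P) * (1 - P) = 1 - P - P + P * P by noncomm_ring, hPP]; abel
    have e1 : frobSq (Uᵀ * A) = Matrix.trace (Aᵀ * P * A) := by
      rw [frobSq_eq_trace, transpose_mul, transpose_transpose, hP]
      congr 1
      simp only [← Matrix.mul_assoc]
    have e3 : frobSq ((1 - P) * A) = Matrix.trace (Aᵀ * (1 - P) * A) := by
      rw [frobSq_eq_trace, transpose_mul, hQ,
        show Aᵀ * (1 - P) * ((1 - P) * A) = Aᵀ * ((1 - P) * (1 - P)) * A by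
          simp only [Matrix.mul_assoc], hQQ]
    have e4 : Matrix.trace (Aᵀ * (1 - P) * A) = frobSq A - frobSq (Uᵀ * A) := by
      rw [Matrix.mul_sub, Matrix.mul_one, Matrix.sub_mul, Matrix.trace_sub, e1,
        frobSq_eq_trace A]
    have := frobSq_nonneg ((1 - P) * A)
    rw [e3, e4] at this
    linarith
  calc (∑ i, Real.sqrt (lam i))
      ≤ ∑ i, (∑ k, ((Uᵀ * A) i k ^ 2 + (Vᵀ * B) i k ^ 2)) / 2 := by
        refine Finset.sum_le_sum fun i _ => ?_
        rw [hkey i, Finset.sum_div]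
        refine Finset.sum_le_sum fun k _ => ?_
        nlinarith [sq_nonneg ((Uᵀ * A) i k - (Vᵀ * B) i k)]
    _ = (frobSq (Uᵀ * A) + frobSq (Vᵀ * B)) / 2 := by
        unfold frobSq
        rw [← Finset.sum_div, ← Finset.sum_add_distrib]
        congr 1
        exact Finset.sum_congr rfl fun i _ => by rw [← Finset.sum_add_distrib]
    _ ≤ (frobSq A + frobSq B) / 2 := by rw [hfrobB]; linarith [hfrobA]

open scoped MatrixOrder in
/-- Nuclear norm of a matrix given in SVD form. -/
lemma nuclearNorm_svd {m n r : ℕ} (U : Matrix (Fin m) (Fin r) ℝ) (d : Fin r → ℝ)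
    (V : Matrix (Fin n) (Fin r) ℝ) (hU : Uᵀ * U = 1) (hV : Vᵀ * V = 1) (hd : ∀ i, 0 ≤ d i) :
    nuclearNorm (U * diagonal d * Vᵀ) = ∑ i, d i := by
  set M : Matrix (Fin m) (Fin n) ℝ := U * diagonal d * Vᵀ with hM
  set S : Matrix (Fin n) (Fin n) ℝ := V * diagonal d * Vᵀ with hS
  have e1 : Mᵀ * M = V * (diagonal d * (diagonal d * Vᵀ)) := by
    rw [hM]
    simp only [transpose_mul, transpose_transpose, diagonal_transpose, Matrix.mul_assoc]
    rw [← Matrix.mul_assoc Uᵀ U, hU, Matrix.one_mul]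
  have e2 : S * S = V * (diagonal d * (diagonal d * Vᵀ)) := by
    rw [hS]
    simp only [Matrix.mul_assoc]
    rw [← Matrix.mul_assoc Vᵀ V, hV, Matrix.one_mul]
  have hsd : diagonal (fun i => Real.sqrt (d i)) * diagonal (fun i => Real.sqrt (d i))
      = (diagonal d : Matrix (Fin r) (Fin r) ℝ) := by
    rw [diagonal_mul_diagonal]
    exact congrArg diagonal (funext fun i => Real.mul_self_sqrt (hd i))
  have hSpsd : PosSemidef S := by
    have h := posSemidef_self_mul_conjTranspose (V * diagonal (fun i => Real.sqrt (d i)))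
    rw [conjTranspose_eq_transpose_of_trivial, transpose_mul, diagonal_transpose] at h
    have : V * diagonal (fun i => Real.sqrt (d i)) *
        (diagonal (fun i => Real.sqrt (d i)) * Vᵀ) = S := by
      rw [hS, Matrix.mul_assoc V, ← Matrix.mul_assoc (diagonal _) (diagonal _) Vᵀ, hsd,
        ← Matrix.mul_assoc]
    rwa [this] at h
  have hP : PosSemidef (Mᵀ * M) := by
    have h := posSemidef_conjTranspose_mul_self M
    rwa [conjTranspose_eq_transpose_of_trivial] at h
  have hSsq : S = CFC.sqrt (Mᵀ * M) := by
    exact ((CFC.sqrt_eq_iff _ _ hP.nonneg hSpsd.nonneg).mpr (by rw [e2, e1])).symm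
  have htr : Matrix.trace (CFC.sqrt (Mᵀ * M)) = ∑ i, Real.sqrt (hP.1.eigenvalues i) := by
    rw [CFC.sqrt_eq_cfc, cfc_nnreal_eq_real _ (Mᵀ * M), hP.1.cfc_eq]
    unfold Matrix.IsHermitian.cfc
    rw [Unitary.conjStarAlgAut_apply, Matrix.trace_mul_cycle, Matrix.star_eq_conjTranspose,
      conjTranspose_eq_transpose_of_trivial]
    have h1 : ((hP.1.eigenvectorUnitary : Matrix (Fin n) (Fin n) ℝ))ᵀ *
        (hP.1.eigenvectorUnitary : Matrix (Fin n) (Fin n) ℝ) = 1 := by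
      have h := Unitary.coe_star_mul_self hP.1.eigenvectorUnitary
      rwa [Matrix.star_eq_conjTranspose, conjTranspose_eq_transpose_of_trivial] at h
    rw [h1, Matrix.one_mul, trace_diagonal]
    simp
    exact Finset.sum_congr rfl fun i _ => by rw [max_eq_left (hP.eigenvalues_nonneg i)]
  have htrS : Matrix.trace S = ∑ i, d i := by
    rw [hS, Matrix.trace_mul_cycle, hV, Matrix.one_mul, trace_diagonal]
  calc nuclearNorm (U * diagonal d * Vᵀ)
      = ∑ i, Real.sqrt (hP.1.eigenvalues i) := rfl
    _ = Matrix.trace (CFC.sqrt (Mᵀ * M)) := htr.symm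
    _ = Matrix.trace S := by rw [hSsq]
    _ = ∑ i, d i := htrS

lemma frobSq_mul_diag {a r : ℕ} (U : Matrix (Fin a) (Fin r) ℝ) (s : Fin r → ℝ)
    (hU : Uᵀ * U = 1) : frobSq (U * diagonal s) = ∑ i, s i ^ 2 := by
  rw [frobSq_eq_trace, transpose_mul, diagonal_transpose, Matrix.mul_assoc,
    ← Matrix.mul_assoc Uᵀ U, hU, Matrix.one_mul, diagonal_mul_diagonal, trace_diagonal]
  exact Finset.sum_congr rfl fun i _ => (pow_two _).symm

lemma frobSq_proj_le {m n : ℕ} (Ω : Finset (Fin m × Fin n)) (Y W : Matrix (Fin m) (Fin n) ℝ) :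
    frobSq (proj Ω Y) ≤ frobSq (proj Ω Y + projPerp Ω W) := by
  unfold frobSq
  refine Finset.sum_le_sum fun i _ => Finset.sum_le_sum fun j _ => ?_
  simp only [proj, projPerp, Matrix.add_apply, Matrix.of_apply]
  split_ifs with h
  · simp
  · simp only [zero_add]
    nlinarith [sq_nonneg (W i j)]

lemma projPerp_zero {m n : ℕ} (Ω : Finset (Fin m × Fin n)) :
    projPerp Ω (0 : Matrix (Fin m) (Fin n) ℝ) = 0 := by
  ext i j
  simp [projPerp]

lemma QA_self {m n r : ℕ} (Ω : Finset (Fin m × Fin n)) (X : Matrix (Fin m) (Fin n) ℝ)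
    (lam : ℝ) (A : Matrix (Fin m) (Fin r) ℝ) (B : Matrix (Fin n) (Fin r) ℝ) :
    QA Ω X lam A A B = Fobj Ω X lam A B := by
  unfold QA Fobj
  rw [sub_self, projPerp_zero, add_zero]
  ring

lemma QB_self {m n r : ℕ} (Ω : Finset (Fin m × Fin n)) (X : Matrix (Fin m) (Fin n) ℝ)
    (lam : ℝ) (A : Matrix (Fin m) (Fin r) ℝ) (B : Matrix (Fin n) (Fin r) ℝ) :
    QB Ω X lam B A B = Fobj Ω X lam A B := by
  unfold QB Fobj
  rw [sub_self, projPerp_zero, add_zero]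
  ring

lemma Fobj_le_QA {m n r : ℕ} (Ω : Finset (Fin m × Fin n)) (X : Matrix (Fin m) (Fin n) ℝ)
    (lam : ℝ) (hlam : 0 ≤ lam) (Z A : Matrix (Fin m) (Fin r) ℝ)
    (B : Matrix (Fin n) (Fin r) ℝ) :
    Fobj Ω X lam Z B ≤ QA Ω X lam Z A B := by
  unfold QA Fobj
  have := frobSq_proj_le Ω (X - Z * Bᵀ) (A * Bᵀ - Z * Bᵀ)
  nlinarith [this]

lemma Fobj_le_QB {m n r : ℕ} (Ω : Finset (Fin m × Fin n)) (X : Matrix (Fin m) (Fin n) ℝ)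
    (lam : ℝ) (hlam : 0 ≤ lam) (Z : Matrix (Fin n) (Fin r) ℝ)
    (A : Matrix (Fin m) (Fin r) ℝ) (B : Matrix (Fin n) (Fin r) ℝ) :
    Fobj Ω X lam A Z ≤ QB Ω X lam Z A B := by
  unfold QB Fobj
  have := frobSq_proj_le Ω (X - A * Zᵀ) (A * Bᵀ - A * Zᵀ)
  nlinarith [this]

theorem F_ge_H_and_H_monotone {m n r : ℕ} (Ω : Finset (Fin m × Fin n))
    (X : Matrix (Fin m) (Fin n) ℝ) (lam : ℝ) (hlam : 0 ≤ lam) :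
    -- F(A,B) ≥ H(ABᵀ) for all A, B
    (∀ (A : Matrix (Fin m) (Fin r) ℝ) (B : Matrix (Fin n) (Fin r) ℝ),
        Fobj Ω X lam A B ≥ Hobj Ω X lam (A * Bᵀ)) ∧
    -- with equality when (A, B) is in SVD form
    (∀ (A : Matrix (Fin m) (Fin r) ℝ) (B : Matrix (Fin n) (Fin r) ℝ),
        SVDForm A B → Fobj Ω X lam A B = Hobj Ω X lam (A * Bᵀ)) ∧
    -- consequently, softImpute-ALS iterates re-parametrized to SVD form after each
    -- iteration yield a decreasing sequence H(A_k B_kᵀ), with H(A_k B_kᵀ) = F(A_k, B_k)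
    (∀ (A : ℕ → Matrix (Fin m) (Fin r) ℝ) (B : ℕ → Matrix (Fin n) (Fin r) ℝ),
        (∀ k : ℕ, SVDForm (A k) (B k)) →
        (∀ k : ℕ, ∃ (A' : Matrix (Fin m) (Fin r) ℝ) (B' : Matrix (Fin n) (Fin r) ℝ),
          (∀ Z₁ : Matrix (Fin m) (Fin r) ℝ,
            QA Ω X lam A' (A k) (B k) ≤ QA Ω X lam Z₁ (A k) (B k)) ∧
          (∀ Z₂ : Matrix (Fin n) (Fin r) ℝ,
            QB Ω X lam B' A' (B k) ≤ QB Ω X lam Z₂ A' (B k)) ∧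
          A (k + 1) * (B (k + 1))ᵀ = A' * B'ᵀ) →
        (∀ k : ℕ, Hobj Ω X lam (A k * (B k)ᵀ) ≥ Hobj Ω X lam (A (k + 1) * (B (k + 1))ᵀ)) ∧
        (∀ k : ℕ, Hobj Ω X lam (A k * (B k)ᵀ) = Fobj Ω X lam (A k) (B k))) := by
  have part1 : ∀ (A : Matrix (Fin m) (Fin r) ℝ) (B : Matrix (Fin n) (Fin r) ℝ),
      Fobj Ω X lam A B ≥ Hobj Ω X lam (A * Bᵀ) := by
    intro A B
    unfold Fobj Hobj
    have h := mul_le_mul_of_nonneg_left (nuclearNorm_le A B) hlam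
    linarith
  have part2 : ∀ (A : Matrix (Fin m) (Fin r) ℝ) (B : Matrix (Fin n) (Fin r) ℝ),
      SVDForm A B → Fobj Ω X lam A B = Hobj Ω X lam (A * Bᵀ) := by
    rintro A B ⟨U, d, V, hU, hV, hd, hA, hB⟩
    have hAB : A * Bᵀ = U * diagonal d * Vᵀ := by
      rw [hA, hB, transpose_mul, diagonal_transpose]
      rw [Matrix.mul_assoc U, ← Matrix.mul_assoc (diagonal _) (diagonal _) Vᵀ,
        diagonal_mul_diagonal,
        show (fun i => Real.sqrt (d i) * Real.sqrt (d i)) = d from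
          funext fun i => Real.mul_self_sqrt (hd i), ← Matrix.mul_assoc]
    have hfa : frobSq A = ∑ i, d i := by
      rw [hA, frobSq_mul_diag U _ hU]
      exact Finset.sum_congr rfl fun i _ => Real.sq_sqrt (hd i)
    have hfb : frobSq B = ∑ i, d i := by
      rw [hB, frobSq_mul_diag V _ hV]
      exact Finset.sum_congr rfl fun i _ => Real.sq_sqrt (hd i)
    have hnn : nuclearNorm (A * Bᵀ) = ∑ i, d i := by
      rw [hAB]; exact nuclearNorm_svd U d V hU hV hd
    unfold Fobj Hobj
    rw [hfa, hfb, hnn]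
    ring
  refine ⟨part1, part2, ?_⟩
  intro A B hSVD hstep
  have hHF : ∀ k : ℕ, Hobj Ω X lam (A k * (B k)ᵀ) = Fobj Ω X lam (A k) (B k) :=
    fun k => (part2 (A k) (B k) (hSVD k)).symm
  refine ⟨fun k => ?_, hHF⟩
  obtain ⟨A', B', hA', hB', hprod⟩ := hstep k
  have c1 : Hobj Ω X lam (A k * (B k)ᵀ) = QA Ω X lam (A k) (A k) (B k) := by
    rw [hHF k, QA_self]
  have c2 : QA Ω X lam A' (A k) (B k) ≤ QA Ω X lam (A k) (A k) (B k) := hA' (A k)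
  have c3 : Fobj Ω X lam A' (B k) ≤ QA Ω X lam A' (A k) (B k) :=
    Fobj_le_QA Ω X lam hlam A' (A k) (B k)
  have c4 : Fobj Ω X lam A' (B k) = QB Ω X lam (B k) A' (B k) := (QB_self Ω X lam A' (B k)).symm
  have c5 : QB Ω X lam B' A' (B k) ≤ QB Ω X lam (B k) A' (B k) := hB' (B k)
  have c6 : Fobj Ω X lam A' B' ≤ QB Ω X lam B' A' (B k) :=
    Fobj_le_QB Ω X lam hlam B' A' (B k)
  have c7 : Hobj Ω X lam (A' * B'ᵀ) ≤ Fobj Ω X lam A' B' := part1 A' B'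
  have c8 : Hobj Ω X lam (A (k + 1) * (B (k + 1))ᵀ) = Hobj Ω X lam (A' * B'ᵀ) := by
    rw [hprod]
  rw [ge_iff_le, c8, c1]
  linarith


end
end

section
/- Let λ > 0 and let (A*,B*) (with A* m×r, B* n×r) be a limit point of the softImpute-ALS iterates, and suppose the convex problem min_M H(M) := (1/2)‖P_Ω(X − M)‖_F² + λ‖M‖_* has a minimizer of rank at most r. If Z* := A*B*ᵀ is a minimizer of the fully observed nuclear-norm problem min_Z (1/2)‖(P_Ω(X) + P_Ω^⊥(A*B*ᵀ)) − Z‖_F² + λ‖Z‖_* (over all m×n matrices Z), then Z* is a minimizer of the convex problem min_M H(M). -/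
noncomputable section

open Matrix Filter

namespace SIALS


def fsq {ι κ : Type*} [Fintype ι] [Fintype κ] (M : Matrix ι κ ℝ) : ℝ := ∑ i, ∑ j, (M i j)^2

lemma fsq_nonneg {ι κ : Type*} [Fintype ι] [Fintype κ] (M : Matrix ι κ ℝ) : 0 ≤ fsq M := by
  apply Finset.sum_nonneg; intro i _; apply Finset.sum_nonneg; intro j _; positivity

lemma dot_self_nonneg {ρ : Type*} [Fintype ρ] (x : ρ → ℝ) : 0 ≤ x ⬝ᵥ x := by
  apply Finset.sum_nonneg; intro i _; exact mul_self_nonneg _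

lemma sum_dotProduct' {ρ ι : Type*} [Fintype ρ] [Fintype ι] (f : ι → ρ → ℝ) (x : ρ → ℝ) :
    (∑ i, f i) ⬝ᵥ x = ∑ i, f i ⬝ᵥ x := by
  simp only [dotProduct, Finset.sum_apply, Finset.sum_mul]
  exact Finset.sum_comm

lemma dotProduct_sum' {ρ ι : Type*} [Fintype ρ] [Fintype ι] (x : ρ → ℝ) (f : ι → ρ → ℝ) :
    x ⬝ᵥ (∑ i, f i) = ∑ i, x ⬝ᵥ f i := by
  simp only [dotProduct, Finset.sum_apply, Finset.mul_sum]
  exact Finset.sum_comm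

lemma dot_mulVec_left {ρ κ : Type*} [Fintype ρ] [Fintype κ] (A : Matrix ρ κ ℝ)
    (x : ρ → ℝ) (y : κ → ℝ) : x ⬝ᵥ (A *ᵥ y) = (Aᵀ *ᵥ x) ⬝ᵥ y := by
  rw [Matrix.mulVec_transpose, Matrix.dotProduct_mulVec]

lemma dot_le_half_add {ρ : Type*} [Fintype ρ] (x y : ρ → ℝ) :
    x ⬝ᵥ y ≤ (x ⬝ᵥ x + y ⬝ᵥ y) / 2 := by
  have h := dot_self_nonneg (x - y)
  rw [sub_dotProduct, dotProduct_sub, dotProduct_sub,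
    dotProduct_comm y x] at h
  linarith

/-- Bessel-type inequality for a pairwise-orthogonal family with norms ≤ 1. -/
lemma bessel {ρ ι : Type*} [Fintype ρ] [Fintype ι] (u : ι → ρ → ℝ)
    (horth : ∀ i j, i ≠ j → u i ⬝ᵥ u j = 0) (hnorm : ∀ i, u i ⬝ᵥ u i ≤ 1)
    (x : ρ → ℝ) : ∑ i, (x ⬝ᵥ u i)^2 ≤ x ⬝ᵥ x := by
  classical
  set c : ι → ℝ := fun i => x ⬝ᵥ u i with hc
  set s : ρ → ℝ := ∑ i, c i • u i with hs
  have h0 : 0 ≤ (x - s) ⬝ᵥ (x - s) := dot_self_nonneg _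
  have hxs : x ⬝ᵥ s = ∑ i, (c i)^2 := by
    rw [hs, dotProduct_sum']
    apply Finset.sum_congr rfl; intro i _
    rw [dotProduct_smul, smul_eq_mul]
    show c i * c i = _; ring
  have hsx : s ⬝ᵥ x = ∑ i, (c i)^2 := by rw [dotProduct_comm]; exact hxs
  have hss : s ⬝ᵥ s = ∑ i, (c i)^2 * (u i ⬝ᵥ u i) := by
    rw [hs, sum_dotProduct']
    apply Finset.sum_congr rfl; intro i _
    rw [dotProduct_sum']
    rw [Finset.sum_eq_single i]
    · rw [smul_dotProduct, dotProduct_smul, smul_eq_mul, smul_eq_mul]; ring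
    · intro j _ hj
      rw [smul_dotProduct, dotProduct_smul, smul_eq_mul, smul_eq_mul,
        horth i j (Ne.symm hj)]; ring
    · intro h; exact absurd (Finset.mem_univ i) h
  have hexp : (x - s) ⬝ᵥ (x - s)
      = x ⬝ᵥ x - 2 * ∑ i, (c i)^2 + ∑ i, (c i)^2 * (u i ⬝ᵥ u i) := by
    rw [sub_dotProduct, dotProduct_sub, dotProduct_sub, hxs, hsx, hss]
    ring
  rw [hexp] at h0
  have hT : ∑ i, (c i)^2 * (u i ⬝ᵥ u i) ≤ ∑ i, (c i)^2 := by
    apply Finset.sum_le_sum; intro i _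
    nlinarith [sq_nonneg (c i), hnorm i]
  linarith

lemma sum_sq_mulVec_le {ρ κ ι : Type*} [Fintype ρ] [Fintype κ] [Fintype ι] (u : ι → ρ → ℝ)
    (horth : ∀ i j, i ≠ j → u i ⬝ᵥ u j = 0) (hnorm : ∀ i, u i ⬝ᵥ u i ≤ 1)
    (A : Matrix ρ κ ℝ) :
    ∑ i, (Aᵀ *ᵥ u i) ⬝ᵥ (Aᵀ *ᵥ u i) ≤ fsq A := by
  have h1 : ∀ i, (Aᵀ *ᵥ u i) ⬝ᵥ (Aᵀ *ᵥ u i) = ∑ c, ((fun q => A q c) ⬝ᵥ u i)^2 := by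
    intro i
    simp only [dotProduct, Matrix.mulVec, Matrix.transpose_apply]
    apply Finset.sum_congr rfl; intro c _
    rw [pow_two]
  calc ∑ i, (Aᵀ *ᵥ u i) ⬝ᵥ (Aᵀ *ᵥ u i) = ∑ c, ∑ i, ((fun q => A q c) ⬝ᵥ u i)^2 := by
        rw [Finset.sum_congr rfl (fun i _ => h1 i)]; exact Finset.sum_comm
    _ ≤ ∑ c, (fun q => A q c) ⬝ᵥ (fun q => A q c) := by
        apply Finset.sum_le_sum; intro c _; exact bessel u horth hnorm _
    _ = fsq A := by
        rw [fsq, Finset.sum_comm]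
        apply Finset.sum_congr rfl; intro c _
        simp [dotProduct, pow_two]



lemma nuclearNorm_mul_le {p q : ℕ} {κ : Type*} [Fintype κ] (A : Matrix (Fin p) κ ℝ)
    (B : Matrix (Fin q) κ ℝ) :
    nuclearNorm (A * Bᵀ) ≤ (fsq A + fsq B) / 2 := by
  set Z : Matrix (Fin p) (Fin q) ℝ := A * Bᵀ with hZ
  have hH := Matrix.isHermitian_conjTranspose_mul_self Z
  set lam : Fin q → ℝ := hH.eigenvalues with hlam
  set v : Fin q → Fin q → ℝ := fun i => ⇑(hH.eigenvectorBasis i) with hv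
  have hvv : ∀ i j, v i ⬝ᵥ v j = if i = j then 1 else 0 := by
    intro i j
    have h := orthonormal_iff_ite.mp hH.eigenvectorBasis.orthonormal i j
    rw [← h, PiLp.inner_apply]
    simp only [RCLike.inner_apply, starRingEnd_apply, star_trivial]
    rw [dotProduct]; exact Finset.sum_congr rfl fun x _ => mul_comm _ _
  have heig : ∀ i, (Zᵀ * Z) *ᵥ v i = lam i • v i := by
    intro i
    rw [← Matrix.conjTranspose_eq_transpose_of_trivial Z]
    exact hH.mulVec_eigenvectorBasis i
  have hnn : ∀ i, 0 ≤ lam i := fun i =>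
    (Matrix.posSemidef_conjTranspose_mul_self Z).eigenvalues_nonneg i
  set w : Fin q → Fin p → ℝ := fun i => Z *ᵥ v i with hw
  have hww : ∀ i j, w i ⬝ᵥ w j = if i = j then lam i else 0 := by
    intro i j
    show (Z *ᵥ v i) ⬝ᵥ (Z *ᵥ v j) = _
    rw [dot_mulVec_left Z (Z *ᵥ v i) (v j), Matrix.mulVec_mulVec, heig i,
      smul_dotProduct, smul_eq_mul, hvv i j]
    by_cases h : i = j <;> simp [h]
  set c : Fin q → ℝ := fun i => if lam i = 0 then 0 else (Real.sqrt (lam i))⁻¹ with hcdef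
  set u : Fin q → Fin p → ℝ := fun i => c i • w i with hu
  have huu : ∀ i j, u i ⬝ᵥ u j = if i = j then (if lam i = 0 then 0 else 1) else 0 := by
    intro i j
    show (c i • w i) ⬝ᵥ (c j • w j) = _
    rw [smul_dotProduct, dotProduct_smul, smul_eq_mul, smul_eq_mul, hww i j]
    by_cases h : i = j
    · subst h
      by_cases h0 : lam i = 0
      · simp [h0]
      · have hpos : 0 < lam i := lt_of_le_of_ne (hnn i) (Ne.symm h0)
        simp only [if_pos rfl, if_neg h0]
        rw [hcdef]
        simp only [if_neg h0]
        rw [← Real.sqrt_mul_self (le_of_lt hpos)]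
        field_simp
        simp [Real.sq_sqrt, Real.sqrt_nonneg]
    · simp [h]
  have horth : ∀ i j, i ≠ j → u i ⬝ᵥ u j = 0 := by
    intro i j hij; rw [huu i j, if_neg hij]
  have hnorm : ∀ i, u i ⬝ᵥ u i ≤ 1 := by
    intro i; rw [huu i i, if_pos rfl]
    by_cases h0 : lam i = 0 <;> simp [h0]
  have hkey : ∀ i, Real.sqrt (lam i) ≤
      ((Aᵀ *ᵥ u i) ⬝ᵥ (Aᵀ *ᵥ u i) + (Bᵀ *ᵥ v i) ⬝ᵥ (Bᵀ *ᵥ v i)) / 2 := by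
    intro i
    have h1 : Real.sqrt (lam i) = u i ⬝ᵥ w i := by
      show _ = (c i • w i) ⬝ᵥ w i
      rw [smul_dotProduct, smul_eq_mul, hww i i, if_pos rfl]
      by_cases h0 : lam i = 0
      · simp [h0, hcdef]
      · have hpos : 0 < lam i := lt_of_le_of_ne (hnn i) (Ne.symm h0)
        rw [hcdef]; simp only [if_neg h0]
        rw [← Real.sqrt_mul_self (le_of_lt hpos)]
        field_simp
        simp [Real.sq_sqrt, Real.sqrt_nonneg]
    have h2 : u i ⬝ᵥ w i = (Aᵀ *ᵥ u i) ⬝ᵥ (Bᵀ *ᵥ v i) := by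
      show u i ⬝ᵥ (Z *ᵥ v i) = _
      rw [hZ, ← Matrix.mulVec_mulVec, dot_mulVec_left]
    rw [h1, h2]
    exact dot_le_half_add _ _
  have hA : ∑ i, (Aᵀ *ᵥ u i) ⬝ᵥ (Aᵀ *ᵥ u i) ≤ fsq A := sum_sq_mulVec_le u horth hnorm A
  have hB : ∑ i, (Bᵀ *ᵥ v i) ⬝ᵥ (Bᵀ *ᵥ v i) ≤ fsq B := by
    apply sum_sq_mulVec_le v _ _ B
    · intro i j hij; rw [hvv i j, if_neg hij]
    · intro i; rw [hvv i i, if_pos rfl]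
  have hnN : nuclearNorm Z = ∑ i, Real.sqrt (lam i) := rfl
  rw [hnN]
  calc ∑ i, Real.sqrt (lam i)
      ≤ ∑ i, ((Aᵀ *ᵥ u i) ⬝ᵥ (Aᵀ *ᵥ u i) + (Bᵀ *ᵥ v i) ⬝ᵥ (Bᵀ *ᵥ v i)) / 2 :=
        Finset.sum_le_sum fun i _ => hkey i
    _ = (∑ i, (Aᵀ *ᵥ u i) ⬝ᵥ (Aᵀ *ᵥ u i) + ∑ i, (Bᵀ *ᵥ v i) ⬝ᵥ (Bᵀ *ᵥ v i)) / 2 := by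
        rw [← Finset.sum_div, ← Finset.sum_add_distrib]
    _ ≤ (fsq A + fsq B) / 2 := by linarith

lemma exists_factorization {p q : ℕ} (Z : Matrix (Fin p) (Fin q) ℝ) :
    ∃ (A : Matrix (Fin p) (Fin q) ℝ) (B : Matrix (Fin q) (Fin q) ℝ),
      Z = A * Bᵀ ∧ fsq A ≤ nuclearNorm Z ∧ fsq B ≤ nuclearNorm Z := by
  have hH := Matrix.isHermitian_conjTranspose_mul_self Z
  set lam : Fin q → ℝ := hH.eigenvalues with hlam
  set v : Fin q → Fin q → ℝ := fun i => ⇑(hH.eigenvectorBasis i) with hv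
  have hvv : ∀ i j, v i ⬝ᵥ v j = if i = j then 1 else 0 := by
    intro i j
    have h := orthonormal_iff_ite.mp hH.eigenvectorBasis.orthonormal i j
    rw [← h, PiLp.inner_apply]
    simp only [RCLike.inner_apply, starRingEnd_apply, star_trivial]
    rw [dotProduct]; exact Finset.sum_congr rfl fun x _ => mul_comm _ _
  have heig : ∀ i, (Zᵀ * Z) *ᵥ v i = lam i • v i := by
    intro i
    rw [← Matrix.conjTranspose_eq_transpose_of_trivial Z]
    exact hH.mulVec_eigenvectorBasis i
  have hnn : ∀ i, 0 ≤ lam i := fun i =>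
    (Matrix.posSemidef_conjTranspose_mul_self Z).eigenvalues_nonneg i
  set w : Fin q → Fin p → ℝ := fun i => Z *ᵥ v i with hw
  have hww : ∀ i j, w i ⬝ᵥ w j = if i = j then lam i else 0 := by
    intro i j
    show (Z *ᵥ v i) ⬝ᵥ (Z *ᵥ v j) = _
    rw [dot_mulVec_left Z (Z *ᵥ v i) (v j), Matrix.mulVec_mulVec, heig i,
      smul_dotProduct, smul_eq_mul, hvv i j]
    by_cases h : i = j <;> simp [h]
  have hw0 : ∀ i, lam i = 0 → w i = 0 := by
    intro i h0
    have := hww i i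
    rw [if_pos rfl, h0] at this
    exact dotProduct_self_eq_zero.mp this
  have hcomp : ∀ j j', ∑ i, v i j * v i j' = if j = j' then 1 else 0 := by
    set V : Matrix (Fin q) (Fin q) ℝ := Matrix.of fun j i => v i j with hV
    have h1 : Vᵀ * V = 1 := by
      ext i i'
      show ∑ j, v i j * v i' j = _
      rw [show (∑ j, v i j * v i' j) = v i ⬝ᵥ v i' from rfl, hvv i i']
      simp [Matrix.one_apply]
    have h2 : V * Vᵀ = 1 := mul_eq_one_comm.mp h1
    intro j j'
    have h3 := congrFun (congrFun h2 j) j'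
    rw [show (V * Vᵀ) j j' = ∑ i, v i j * v i j' from rfl] at h3
    rw [h3]
    simp [Matrix.one_apply]
  set d : Fin q → ℝ := fun i => if lam i = 0 then 0 else (Real.sqrt (Real.sqrt (lam i)))⁻¹
    with hd
  refine ⟨Matrix.of fun k i => d i * w i k,
    Matrix.of fun j i => Real.sqrt (Real.sqrt (lam i)) * v i j, ?_, ?_, ?_⟩
  · ext k j
    show Z k j = ∑ i, (d i * w i k) * (Real.sqrt (Real.sqrt (lam i)) * v i j)
    have hterm : ∀ i, (d i * w i k) * (Real.sqrt (Real.sqrt (lam i)) * v i j)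
        = w i k * v i j := by
      intro i
      by_cases h0 : lam i = 0
      · rw [hd]; simp only [if_pos h0]
        rw [hw0 i h0]
        simp
      · have hpos : 0 < lam i := lt_of_le_of_ne (hnn i) (Ne.symm h0)
        have hs : 0 < Real.sqrt (Real.sqrt (lam i)) :=
          Real.sqrt_pos.mpr (Real.sqrt_pos.mpr hpos)
        rw [hd]; simp only [if_neg h0]
        field_simp
    rw [Finset.sum_congr rfl fun i _ => hterm i]
    have hwk : ∀ i, w i k = ∑ j', Z k j' * v i j' := fun i => rfl
    rw [Finset.sum_congr rfl fun i _ => by rw [hwk i, Finset.sum_mul]]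
    rw [Finset.sum_comm]
    have hj' : ∀ j', ∑ i, Z k j' * v i j' * v i j = Z k j' * (if j' = j then 1 else 0) := by
      intro j'
      rw [← hcomp j' j, Finset.mul_sum]
      apply Finset.sum_congr rfl; intro i _; ring
    rw [Finset.sum_congr rfl fun j' _ => hj' j']
    simp
  · show (∑ k, ∑ i, (d i * w i k)^2) ≤ nuclearNorm Z
    rw [Finset.sum_comm]
    apply Finset.sum_le_sum
    intro i _
    have hsum : ∑ k, (d i * w i k)^2 = (d i)^2 * (w i ⬝ᵥ w i) := by
      rw [show w i ⬝ᵥ w i = ∑ k, w i k * w i k from rfl, Finset.mul_sum]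
      apply Finset.sum_congr rfl; intro k _; ring
    rw [hsum, hww i i, if_pos rfl]
    by_cases h0 : lam i = 0
    · rw [hd]; simp only [if_pos h0]
      simp [h0]
    · have hpos : 0 < lam i := lt_of_le_of_ne (hnn i) (Ne.symm h0)
      rw [hd]; simp only [if_neg h0]
      have h1 : ((Real.sqrt (Real.sqrt (lam i)))⁻¹)^2 = (Real.sqrt (lam i))⁻¹ := by
        rw [inv_pow, Real.sq_sqrt (Real.sqrt_nonneg (lam i))]
      rw [h1]
      have h2 : lam i = Real.sqrt (lam i) * Real.sqrt (lam i) :=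
        (Real.mul_self_sqrt (hnn i)).symm
      have h3 : 0 < Real.sqrt (lam i) := Real.sqrt_pos.mpr hpos
      rw [h2]
      field_simp
      rw [Real.sqrt_sq (Real.sqrt_nonneg _)]; exact le_of_eq (sq _)
  · show (∑ j, ∑ i, (Real.sqrt (Real.sqrt (lam i)) * v i j)^2) ≤ nuclearNorm Z
    rw [Finset.sum_comm]
    apply Finset.sum_le_sum
    intro i _
    have hsum : ∑ j, (Real.sqrt (Real.sqrt (lam i)) * v i j)^2
        = (Real.sqrt (Real.sqrt (lam i)))^2 * (v i ⬝ᵥ v i) := by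
      rw [show v i ⬝ᵥ v i = ∑ j, v i j * v i j from rfl, Finset.mul_sum]
      apply Finset.sum_congr rfl; intro j _; ring
    rw [hsum, hvv i i, if_pos rfl, mul_one, Real.sq_sqrt (Real.sqrt_nonneg (lam i))]

lemma nuclearNorm_convex {p q : ℕ} (Z₁ Z₂ : Matrix (Fin p) (Fin q) ℝ) {t : ℝ}
    (ht0 : 0 ≤ t) (ht1 : t ≤ 1) :
    nuclearNorm ((1 - t) • Z₁ + t • Z₂) ≤ (1 - t) * nuclearNorm Z₁ + t * nuclearNorm Z₂ := by
  obtain ⟨A₁, B₁, hZ₁, hA₁, hB₁⟩ := exists_factorization Z₁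
  obtain ⟨A₂, B₂, hZ₂, hA₂, hB₂⟩ := exists_factorization Z₂
  have ht1' : (0:ℝ) ≤ 1 - t := by linarith
  set A : Matrix (Fin p) (Fin q ⊕ Fin q) ℝ := Matrix.of fun k i =>
    Sum.elim (fun i1 => Real.sqrt (1 - t) * A₁ k i1) (fun i2 => Real.sqrt t * A₂ k i2) i
    with hA
  set B : Matrix (Fin q) (Fin q ⊕ Fin q) ℝ := Matrix.of fun j i =>
    Sum.elim (fun i1 => Real.sqrt (1 - t) * B₁ j i1) (fun i2 => Real.sqrt t * B₂ j i2) i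
    with hB
  have hfact : (1 - t) • Z₁ + t • Z₂ = A * Bᵀ := by
    ext k j
    show (1 - t) * Z₁ k j + t * Z₂ k j = ∑ i, A k i * B j i
    rw [Fintype.sum_sum_type]
    have e1 : ∑ i1, A k (Sum.inl i1) * B j (Sum.inl i1) = (1 - t) * Z₁ k j := by
      rw [hZ₁]
      show ∑ i1, (Real.sqrt (1-t) * A₁ k i1) * (Real.sqrt (1-t) * B₁ j i1)
        = (1 - t) * ∑ i1, A₁ k i1 * B₁ j i1
      rw [Finset.mul_sum]
      apply Finset.sum_congr rfl; intro i1 _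
      rw [show Real.sqrt (1-t) * A₁ k i1 * (Real.sqrt (1-t) * B₁ j i1)
        = (Real.sqrt (1-t) * Real.sqrt (1-t)) * (A₁ k i1 * B₁ j i1) by ring,
        Real.mul_self_sqrt ht1']
    have e2 : ∑ i2, A k (Sum.inr i2) * B j (Sum.inr i2) = t * Z₂ k j := by
      rw [hZ₂]
      show ∑ i2, (Real.sqrt t * A₂ k i2) * (Real.sqrt t * B₂ j i2)
        = t * ∑ i2, A₂ k i2 * B₂ j i2
      rw [Finset.mul_sum]
      apply Finset.sum_congr rfl; intro i2 _
      rw [show Real.sqrt t * A₂ k i2 * (Real.sqrt t * B₂ j i2)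
        = (Real.sqrt t * Real.sqrt t) * (A₂ k i2 * B₂ j i2) by ring,
        Real.mul_self_sqrt ht0]
    rw [e1, e2]
  have hfsqA : fsq A = (1 - t) * fsq A₁ + t * fsq A₂ := by
    rw [fsq]
    have : ∀ k, ∑ i, (A k i)^2 = (1-t) * ∑ i1, (A₁ k i1)^2 + t * ∑ i2, (A₂ k i2)^2 := by
      intro k
      rw [Fintype.sum_sum_type, Finset.mul_sum, Finset.mul_sum]
      congr 1
      · apply Finset.sum_congr rfl; intro i1 _
        show (Real.sqrt (1-t) * A₁ k i1)^2 = _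
        rw [mul_pow, Real.sq_sqrt ht1']
      · apply Finset.sum_congr rfl; intro i2 _
        show (Real.sqrt t * A₂ k i2)^2 = _
        rw [mul_pow, Real.sq_sqrt ht0]
    rw [Finset.sum_congr rfl fun k _ => this k, Finset.sum_add_distrib,
      ← Finset.mul_sum, ← Finset.mul_sum]
    rfl
  have hfsqB : fsq B = (1 - t) * fsq B₁ + t * fsq B₂ := by
    rw [fsq]
    have : ∀ j, ∑ i, (B j i)^2 = (1-t) * ∑ i1, (B₁ j i1)^2 + t * ∑ i2, (B₂ j i2)^2 := by
      intro j
      rw [Fintype.sum_sum_type, Finset.mul_sum, Finset.mul_sum]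
      congr 1
      · apply Finset.sum_congr rfl; intro i1 _
        show (Real.sqrt (1-t) * B₁ j i1)^2 = _
        rw [mul_pow, Real.sq_sqrt ht1']
      · apply Finset.sum_congr rfl; intro i2 _
        show (Real.sqrt t * B₂ j i2)^2 = _
        rw [mul_pow, Real.sq_sqrt ht0]
    rw [Finset.sum_congr rfl fun j _ => this j, Finset.sum_add_distrib,
      ← Finset.mul_sum, ← Finset.mul_sum]
    rfl
  calc nuclearNorm ((1 - t) • Z₁ + t • Z₂) = nuclearNorm (A * Bᵀ) := by rw [hfact]
    _ ≤ (fsq A + fsq B) / 2 := nuclearNorm_mul_le A B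
    _ = ((1-t) * (fsq A₁ + fsq B₁) + t * (fsq A₂ + fsq B₂)) / 2 := by
        rw [hfsqA, hfsqB]; ring
    _ ≤ (1 - t) * nuclearNorm Z₁ + t * nuclearNorm Z₂ := by
        nlinarith [mul_le_mul_of_nonneg_left hA₁ ht1', mul_le_mul_of_nonneg_left hB₁ ht1',
          mul_le_mul_of_nonneg_left hA₂ ht0, mul_le_mul_of_nonneg_left hB₂ ht0]


end SIALS

theorem softImputeALS_limit_solves_convex {m n r : ℕ} (Ω : Finset (Fin m × Fin n))
    (X : Matrix (Fin m) (Fin n) ℝ) (lam : ℝ) (hlam : 0 < lam)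
    (A : ℕ → Matrix (Fin m) (Fin r) ℝ) (B : ℕ → Matrix (Fin n) (Fin r) ℝ)
    (hALS : SoftImputeALS Ω X lam A B)
    (Astar : Matrix (Fin m) (Fin r) ℝ) (Bstar : Matrix (Fin n) (Fin r) ℝ)
    (φ : ℕ → ℕ) (hφ : StrictMono φ)
    (hlim : Tendsto (fun k => (A (φ k), B (φ k))) atTop (nhds (Astar, Bstar)))
    -- the convex problem has a minimizer of rank at most r
    (hminrank : ∃ M : Matrix (Fin m) (Fin n) ℝ, M.rank ≤ r ∧
      ∀ M' : Matrix (Fin m) (Fin n) ℝ, Hobj Ω X lam M ≤ Hobj Ω X lam M')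
    -- Z* = A*B*ᵀ solves the fully observed nuclear-norm problem
    (hfull : ∀ Z : Matrix (Fin m) (Fin n) ℝ,
      (1 / 2) * frobSq ((proj Ω X + projPerp Ω (Astar * Bstarᵀ)) - Astar * Bstarᵀ) +
          lam * nuclearNorm (Astar * Bstarᵀ) ≤
        (1 / 2) * frobSq ((proj Ω X + projPerp Ω (Astar * Bstarᵀ)) - Z) +
          lam * nuclearNorm Z) :
    ∀ M : Matrix (Fin m) (Fin n) ℝ, Hobj Ω X lam (Astar * Bstarᵀ) ≤ Hobj Ω X lam M := by
  intro M
  set Zs : Matrix (Fin m) (Fin n) ℝ := Astar * Bstarᵀ with hZs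
  -- splitting identity for the fully observed objective
  have hb : ∀ Z : Matrix (Fin m) (Fin n) ℝ,
      frobSq ((proj Ω X + projPerp Ω Zs) - Z)
        = frobSq (proj Ω (X - Z)) + frobSq (projPerp Ω (Zs - Z)) := by
    intro Z
    rw [frobSq, frobSq, frobSq, ← Finset.sum_add_distrib]
    apply Finset.sum_congr rfl; intro i _
    rw [← Finset.sum_add_distrib]
    apply Finset.sum_congr rfl; intro j _
    by_cases h : (i, j) ∈ Ω <;>
      simp [proj, projPerp, Matrix.sub_apply, Matrix.add_apply, h]
  have ha : frobSq ((proj Ω X + projPerp Ω Zs) - Zs) = frobSq (proj Ω (X - Zs)) := by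
    rw [hb Zs]
    have hzero : frobSq (projPerp Ω (Zs - Zs)) = 0 := by
      rw [sub_self, frobSq]
      apply Finset.sum_eq_zero; intro i _
      apply Finset.sum_eq_zero; intro j _
      by_cases h : (i, j) ∈ Ω <;> simp [projPerp, h]
    rw [hzero, add_zero]
  set C : ℝ := frobSq (projPerp Ω (Zs - M)) with hC
  have hCnn : 0 ≤ C := SIALS.fsq_nonneg _
  have key : ∀ t : ℝ, 0 < t → t ≤ 1 →
      Hobj Ω X lam Zs ≤ Hobj Ω X lam M + t * C / 2 := by
    intro t ht0 ht1
    set Zt : Matrix (Fin m) (Fin n) ℝ := (1 - t) • Zs + t • M with hZt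
    have h1 := hfull Zt
    rw [ha, hb Zt] at h1
    have hperp : frobSq (projPerp Ω (Zs - Zt)) = t^2 * C := by
      have hdiff : Zs - Zt = t • (Zs - M) := by
        ext i j
        simp only [hZt, Matrix.sub_apply, Matrix.add_apply, Matrix.smul_apply, smul_eq_mul]
        ring
      rw [hdiff, hC, frobSq, frobSq, Finset.mul_sum]
      apply Finset.sum_congr rfl; intro i _
      rw [Finset.mul_sum]
      apply Finset.sum_congr rfl; intro j _
      by_cases h : (i, j) ∈ Ω <;>
        simp [projPerp, Matrix.smul_apply, h] <;> ring
    have hq : frobSq (proj Ω (X - Zt))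
        ≤ (1 - t) * frobSq (proj Ω (X - Zs)) + t * frobSq (proj Ω (X - M)) := by
      rw [frobSq, frobSq, frobSq, Finset.mul_sum, Finset.mul_sum, ← Finset.sum_add_distrib]
      apply Finset.sum_le_sum; intro i _
      rw [Finset.mul_sum, Finset.mul_sum, ← Finset.sum_add_distrib]
      apply Finset.sum_le_sum; intro j _
      by_cases h : (i, j) ∈ Ω
      · simp only [proj, Matrix.of_apply, if_pos h, Matrix.sub_apply, hZt,
          Matrix.add_apply, Matrix.smul_apply, smul_eq_mul]
        nlinarith [sq_nonneg (X i j - Zs i j - (X i j - M i j)),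
          mul_nonneg ht0.le (by linarith : (0:ℝ) ≤ 1 - t)]
      · simp [proj, h]
    have hnuc : nuclearNorm Zt ≤ (1 - t) * nuclearNorm Zs + t * nuclearNorm M :=
      SIALS.nuclearNorm_convex Zs M ht0.le ht1
    have hn : lam * nuclearNorm Zt ≤ lam * ((1 - t) * nuclearNorm Zs + t * nuclearNorm M) :=
      mul_le_mul_of_nonneg_left hnuc hlam.le
    simp only [Hobj]
    set qs : ℝ := frobSq (proj Ω (X - Zs))
    set qm : ℝ := frobSq (proj Ω (X - M))
    set qt : ℝ := frobSq (proj Ω (X - Zt))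
    set ns : ℝ := nuclearNorm Zs
    set nm : ℝ := nuclearNorm M
    set nt : ℝ := nuclearNorm Zt
    rw [hperp] at h1
    -- h1 : 1/2 * qs + lam * ns ≤ 1/2 * (qt + t^2 * C) + lam * nt
    have hfinal : (1/2) * qs + lam * ns
        ≤ (1 - t) * ((1/2) * qs + lam * ns) + t * ((1/2) * qm + lam * nm) + t^2 * C / 2 := by
      nlinarith [h1, hq, hn]
    have h2 : t * ((1/2) * qs + lam * ns) ≤ t * ((1/2) * qm + lam * nm + t * C / 2) := by
      nlinarith [hfinal]
    have h3 := le_of_mul_le_mul_left h2 ht0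
    linarith
  by_contra hcon
  push_neg at hcon
  set S : ℝ := Hobj Ω X lam Zs
  set T : ℝ := Hobj Ω X lam M
  have hST : 0 < S - T := by linarith
  set t : ℝ := min 1 ((S - T) / (C + 1)) with htdef
  have htpos : 0 < t := lt_min one_pos (div_pos hST (by linarith))
  have htle : t ≤ 1 := min_le_left _ _
  have h4 := key t htpos htle
  have h5 : t ≤ (S - T) / (C + 1) := min_le_right _ _
  have h6 : t * (C + 1) ≤ S - T := by
    rw [← le_div_iff₀ (by linarith : (0:ℝ) < C + 1)]
    exact h5
  nlinarith [h4, h6, htpos, hCnn]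


end
end
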